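/- arXiv:0805.2907 — 4 statements merged into one kernel-verified Lean document; each statement's English description precedes it below -/
import Mathlib

section
/- For Γ = ℤω and X = [2ω, -ω], the space F(X) is a free ℤ-module of rank 4 with basis θ₁(n)=1, θ₂(n)=n, θ₃(n)=n/2+(1-(-1)ⁿ)/4, and θ₄(n)=θ₃(n)·[n≥0]; moreover θ₁, θ₂, θ₃ form a ℤ-basis of DM(X). -/
noncomputable section

/-- The difference operator `∇ₐ` on functions `ℤ → ℤ`. -/
def nab1 (a : ℤ) (f : ℤ → ℤ) : ℤ → ℤ := fun n => f n - f (n - a)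

/-- The space `𝓕(X)` for `Γ = ℤω`, `X = [2ω, -ω]`: the only nontrivial condition
(for the rational subspace `r = {0}`) is that `∇_{2ω}∇_{-ω} f` is supported at `0`. -/
def memFX (f : ℤ → ℤ) : Prop := ∀ n : ℤ, n ≠ 0 → nab1 2 (nab1 (-1) f) n = 0

/-- The Dahmen–Micchelli space `DM(X)` for `X = [2ω, -ω]`: `∇_{2ω}∇_{-ω} f = 0`. -/
def memDMX (f : ℤ → ℤ) : Prop := ∀ n : ℤ, nab1 2 (nab1 (-1) f) n = 0

def θ₁ : ℤ → ℤ := fun _ => 1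
def θ₂ : ℤ → ℤ := fun n => n
/-- `θ₃(n) = n/2 + (1-(-1)ⁿ)/4`, i.e. `n/2` for even `n` and `(n+1)/2` for odd `n`. -/
def θ₃ : ℤ → ℤ := fun n => if Even n then n / 2 else (n + 1) / 2
def θ₄ : ℤ → ℤ := fun n => if 0 ≤ n then θ₃ n else 0

lemma th3_rec (n : ℤ) : θ₃ n - θ₃ (n+1) - (θ₃ (n-2) - θ₃ (n-1)) = 0 := by
  simp only [θ₃, Int.even_iff]; split_ifs <;> omega

lemma th4_rec (n : ℤ) (hn : n ≠ 0) : θ₄ n - θ₄ (n+1) - (θ₄ (n-2) - θ₄ (n-1)) = 0 := by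
  simp only [θ₄, θ₃, Int.even_iff]; split_ifs <;> omega

lemma th3_vals : θ₃ 0 = 0 ∧ θ₃ 1 = 1 ∧ θ₃ (-1) = 0 ∧ θ₃ (-2) = -1 := by
  norm_num [θ₃, Int.even_iff]

lemma th4_vals : θ₄ 0 = 0 ∧ θ₄ 1 = 1 ∧ θ₄ (-1) = 0 ∧ θ₄ (-2) = 0 := by
  norm_num [θ₄, θ₃, Int.even_iff]

/-- rewrite of the FX condition as a recurrence -/
lemma memFX_iff (f : ℤ → ℤ) :
    memFX f ↔ ∀ n : ℤ, n ≠ 0 → f n - f (n+1) - (f (n-2) - f (n-1)) = 0 := by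
  unfold memFX nab1
  constructor <;> intro h n hn <;> have := h n hn <;>
    · rw [show n - -1 = n + 1 by ring, show n - 2 - -1 = n - 1 by ring] at *
      linarith

lemma memDMX_iff (f : ℤ → ℤ) :
    memDMX f ↔ ∀ n : ℤ, f n - f (n+1) - (f (n-2) - f (n-1)) = 0 := by
  unfold memDMX nab1
  constructor <;> intro h n <;> have := h n <;>
    · rw [show n - -1 = n + 1 by ring, show n - 2 - -1 = n - 1 by ring] at *
      linarith

lemma vanish (d : ℤ → ℤ)
    (hrec : ∀ n : ℤ, n ≠ 0 → d n - d (n+1) - (d (n-2) - d (n-1)) = 0)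
    (hm2 : d (-2) = 0) (hm1 : d (-1) = 0) (h0 : d 0 = 0) (hp : d 1 = 0) :
    ∀ n : ℤ, d n = 0 := by
  have up : ∀ n : ℤ, 1 ≤ n → d n = 0 ∧ d (n-1) = 0 ∧ d (n-2) = 0 := by
    refine Int.le_induction ?_ ?_
    · norm_num [hp, h0, hm1]
    · intro n hn ih
      obtain ⟨a, b, c⟩ := ih
      have h := hrec n (by omega)
      refine ⟨by linarith, ?_, ?_⟩
      · rw [show n+1-1 = n by ring]; exact a
      · rw [show n+1-2 = n-1 by ring]; exact b
  have down : ∀ m : ℤ, 1 ≤ m → d (-m+1) = 0 ∧ d (-m) = 0 ∧ d (-m-1) = 0 := by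
    refine Int.le_induction ?_ ?_
    · norm_num [h0, hm1, hm2]
    · intro m hm ih
      obtain ⟨a, b, c⟩ := ih
      have h := hrec (-m) (by omega)
      refine ⟨?_, ?_, ?_⟩
      · rw [show -(m+1)+1 = -m by ring]; exact b
      · rw [show -(m+1) = -m-1 by ring]; exact c
      · rw [show -(m+1)-1 = -m-2 by ring]; linarith
  intro n
  rcases lt_trichotomy n 0 with h | h | h
  · have := (down (-n) (by omega)).2.1
    simpa using this
  · simpa [h] using h0
  · exact (up n (by omega)).1

lemma memFX_combo (a b c e : ℤ) :
    memFX (fun n => a * θ₁ n + b * θ₂ n + c * θ₃ n + e * θ₄ n) := by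
  rw [memFX_iff]
  intro n hn
  have h3 := th3_rec n
  have h4 := th4_rec n hn
  simp only [θ₁, θ₂]
  linear_combination c * h3 + e * h4

lemma memDMX_combo (a b c : ℤ) :
    memDMX (fun n => a * θ₁ n + b * θ₂ n + c * θ₃ n) := by
  rw [memDMX_iff]
  intro n
  have h3 := th3_rec n
  simp only [θ₁, θ₂]
  linear_combination c * h3

/-- For `Γ = ℤω` and `X = [2ω, -ω]`, `𝓕(X)` is a free `ℤ`-module of rank `4` with basis
`θ₁, θ₂, θ₃, θ₄`, and `θ₁, θ₂, θ₃` form a `ℤ`-basis of `DM(X)`. -/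
theorem example_rank_one :
    (∀ f : ℤ → ℤ, memFX f ↔ ∃! c : ℤ × ℤ × ℤ × ℤ,
      f = fun n => c.1 * θ₁ n + c.2.1 * θ₂ n + c.2.2.1 * θ₃ n + c.2.2.2 * θ₄ n) ∧
    (∀ f : ℤ → ℤ, memDMX f ↔ ∃! c : ℤ × ℤ × ℤ,
      f = fun n => c.1 * θ₁ n + c.2.1 * θ₂ n + c.2.2 * θ₃ n) := by
  obtain ⟨v30, v31, v3m1, v3m2⟩ := th3_vals
  obtain ⟨v40, v41, v4m1, v4m2⟩ := th4_vals
  constructor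
  · intro f
    constructor
    · intro hf
      have hrecf := (memFX_iff f).1 hf
      refine ⟨(f 0, f 0 - f (-1), -f 0 + 2 * f (-1) - f (-2), f 1 - f 0 - f (-1) + f (-2)), ?_, ?_⟩
      · set a := f 0 with ha
        set b := f 0 - f (-1) with hb
        set c := -f 0 + 2 * f (-1) - f (-2) with hc
        set e := f 1 - f 0 - f (-1) + f (-2) with he
        have hG := (memFX_iff (fun n => a * θ₁ n + b * θ₂ n + c * θ₃ n + e * θ₄ n)).1
          (memFX_combo a b c e)
        funext n
        have key := vanish (fun n => f n - (a * θ₁ n + b * θ₂ n + c * θ₃ n + e * θ₄ n))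
          (fun n hn => by have h1 := hrecf n hn; have h2 := hG n hn; linarith)
          (by simp only [θ₁, θ₂, v3m2, v4m2]; rw [ha, hb, hc, he]; ring)
          (by simp only [θ₁, θ₂, v3m1, v4m1]; rw [ha, hb, hc, he]; ring)
          (by simp only [θ₁, θ₂, v30, v40]; rw [ha, hb, hc, he]; ring)
          (by simp only [θ₁, θ₂, v31, v41]; rw [ha, hb, hc, he]; ring)
          n
        linarith [key]
      · rintro ⟨a, b, c, e⟩ hc
        have e0 := congrFun hc 0
        have e1 := congrFun hc 1
        have em1 := congrFun hc (-1)
        have em2 := congrFun hc (-2)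
        simp only [θ₁, θ₂, v30, v31, v3m1, v3m2, v40, v41, v4m1, v4m2] at e0 e1 em1 em2
        simp only [Prod.mk.injEq]
        refine ⟨by omega, by omega, by omega, by omega⟩
    · rintro ⟨c, hc, -⟩
      rw [hc]
      exact memFX_combo c.1 c.2.1 c.2.2.1 c.2.2.2
  · intro f
    constructor
    · intro hf
      have hrecf := (memDMX_iff f).1 hf
      refine ⟨(f 0, f 0 - f (-1), -f 0 + 2 * f (-1) - f (-2)), ?_, ?_⟩
      · set a := f 0 with ha
        set b := f 0 - f (-1) with hb
        set c := -f 0 + 2 * f (-1) - f (-2) with hc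
        have h4 : f 1 - f 0 - f (-1) + f (-2) = 0 := by
          have := hrecf 0
          rw [show (0:ℤ)+1 = 1 by ring, show (0:ℤ)-2 = -2 by ring, show (0:ℤ)-1 = -1 by ring] at this
          linarith
        have hG := (memDMX_iff (fun n => a * θ₁ n + b * θ₂ n + c * θ₃ n)).1
          (memDMX_combo a b c)
        funext n
        have key := vanish (fun n => f n - (a * θ₁ n + b * θ₂ n + c * θ₃ n))
          (fun n hn => by have h1 := hrecf n; have h2 := hG n; linarith)
          (by simp only [θ₁, θ₂, v3m2]; rw [ha, hb, hc]; ring)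
          (by simp only [θ₁, θ₂, v3m1]; rw [ha, hb, hc]; ring)
          (by simp only [θ₁, θ₂, v30]; rw [ha, hb, hc]; ring)
          (by simp only [θ₁, θ₂, v31]; rw [ha, hb, hc]; linarith [h4])
          n
        linarith [key]
      · rintro ⟨a, b, c⟩ hc
        have e0 := congrFun hc 0
        have em1 := congrFun hc (-1)
        have em2 := congrFun hc (-2)
        simp only [θ₁, θ₂, v30, v3m1, v3m2] at e0 em1 em2
        simp only [Prod.mk.injEq]
        refine ⟨by omega, by omega, by omega⟩
    · rintro ⟨c, hc, -⟩
      rw [hc]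
      exact memDMX_combo c.1 c.2.1 c.2.2
end
end

section
/- For a rational subspace r and a regular face F for X\r, the map g ↦ P_{X\r}^{F} * g is an injection from F(X∩r) into F(X), and ∇_{X\r}(P_{X\r}^{F} * g) = g for all g ∈ F(X∩r). -/
open Function

attribute [local instance] Classical.propDecidable

noncomputable section

/-- The lattice `Γ = ι → ℤ`. -/
abbrev ZLat (ι : Type*) := ι → ℤ
/-- The ambient real vector space `V = Γ ⊗ ℝ = ι → ℝ`. -/
abbrev Amb (ι : Type*) := ι → ℝ

variable {ι : Type*} [Fintype ι]

/-- Embedding of the lattice into the ambient space. -/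
def castV (γ : ZLat ι) : Amb ι := fun i => (γ i : ℝ)

/-- Standard pairing on `V`. -/
def dotR (u v : Amb ι) : ℝ := ∑ i, u i * v i

/-- The difference operator `∇ₐ`. -/
def nab (a : ZLat ι) (f : ZLat ι → ℤ) : ZLat ι → ℤ := fun b => f b - f (b - a)

/-- `∇_Y = ∏_{a ∈ Y} ∇ₐ` for a list `Y`. -/
def nabL (Y : List (ZLat ι)) (f : ZLat ι → ℤ) : ZLat ι → ℤ := Y.foldr nab f

/-- Delta function at `0`. -/
def delta0 : ZLat ι → ℤ := fun γ => if γ = 0 then 1 else 0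

/-- The partition function of a list `Y`: the number of ways of writing `γ` as a
nonnegative integral combination of the entries of `Y`. -/
def partFn (Y : List (ZLat ι)) : ZLat ι → ℤ :=
  fun γ => Nat.card {k : Fin Y.length → ℕ // ∑ i, (k i : ℤ) • Y.get i = γ}

/-- The cone `C(Y)` of nonnegative real combinations of the entries of `Y`. -/
def coneC (Y : List (ZLat ι)) : Set (Amb ι) :=
  {v | ∃ t : Fin Y.length → ℝ, (∀ i, 0 ≤ t i) ∧ v = ∑ i, t i • castV (Y.get i)}

/-- `C(Y)` is pointed: it contains no line. -/
def PointedList (Y : List (ZLat ι)) : Prop :=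
  ∀ v ∈ coneC Y, -v ∈ coneC Y → v = 0

/-- The zonotope `B(Y) = {∑ tᵢ aᵢ : 0 ≤ tᵢ ≤ 1}`. -/
def zono (Y : List (ZLat ι)) : Set (Amb ι) :=
  {v | ∃ t : Fin Y.length → ℝ, (∀ i, 0 ≤ t i ∧ t i ≤ 1) ∧ v = ∑ i, t i • castV (Y.get i)}

/-- The real span of a list of lattice vectors. -/
def spanOf (Y : List (ZLat ι)) : Submodule ℝ (Amb ι) :=
  Submodule.span ℝ (castV '' {a | a ∈ Y})

/-- A subspace is rational (relative to `X`) if it is spanned by a sublist of `X`. -/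
def IsRational (X : List (ZLat ι)) (r : Submodule ℝ (Amb ι)) : Prop :=
  ∃ Y : List (ZLat ι), (∀ a ∈ Y, a ∈ X) ∧ r = spanOf Y

/-- The sublist `X ∩ r`. -/
def inSub (X : List (ZLat ι)) (r : Submodule ℝ (Amb ι)) : List (ZLat ι) :=
  X.filter (fun a => decide (castV a ∈ r))

/-- The sublist `X \ r`. -/
def outSub (X : List (ZLat ι)) (r : Submodule ℝ (Amb ι)) : List (ZLat ι) :=
  X.filter (fun a => decide (castV a ∉ r))

/-- The operator `∇_{X \ r}`. -/
def nabOut (X : List (ZLat ι)) (r : Submodule ℝ (Amb ι)) (f : ZLat ι → ℤ) : ZLat ι → ℤ :=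
  nabL (outSub X r) f

/-- The space `𝓕(X)`: `∇_{X\r} f` is supported on `Γ ∩ r` for every rational `r`. -/
def memF (X : List (ZLat ι)) (f : ZLat ι → ℤ) : Prop :=
  ∀ r, IsRational X r → support (nabOut X r f) ⊆ {γ | castV γ ∈ r}

/-- The Dahmen–Micchelli space of a list `Y` (inside its span): `f` is killed by
`∇_{Y \ H}` for every rational hyperplane `H` of the span of `Y`. -/
def memDM (Y : List (ZLat ι)) (f : ZLat ι → ℤ) : Prop :=
  ∀ H, IsRational Y H → Module.finrank ℝ H + 1 = Module.finrank ℝ (spanOf Y) →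
    nabOut Y H f = 0

/-- `𝓕(X ∩ r)`, viewed as functions on `Γ` supported on `Γ ∩ r`. -/
def memFrel (X : List (ZLat ι)) (r : Submodule ℝ (Amb ι)) (g : ZLat ι → ℤ) : Prop :=
  support g ⊆ {γ | castV γ ∈ r} ∧ memF (inSub X r) g

/-- `DM(X ∩ r)`, viewed as functions on `Γ` supported on `Γ ∩ r`. -/
def memDMrel (X : List (ZLat ι)) (r : Submodule ℝ (Amb ι)) (g : ZLat ι → ℤ) : Prop :=
  support g ⊆ {γ | castV γ ∈ r} ∧ memDM (inSub X r) g

/-- `u` is a regular vector for `X \ r`:  `u ∈ r^⊥` and `⟨u, a⟩ ≠ 0` for all `a ∈ X \ r`.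
It determines the regular face `F` containing it. -/
def Reg (X : List (ZLat ι)) (r : Submodule ℝ (Amb ι)) (u : Amb ι) : Prop :=
  (∀ v ∈ r, dotR u v = 0) ∧ ∀ a ∈ X, castV a ∉ r → dotR u (castV a) ≠ 0

/-- The sublist `B ⊆ X \ r` of elements negative on `u`. -/
def negPart (X : List (ZLat ι)) (r : Submodule ℝ (Amb ι)) (u : Amb ι) : List (ZLat ι) :=
  (outSub X r).filter (fun a => decide (dotR u (castV a) < 0))

/-- The list `[A, -B]`: entries of `X \ r`, with sign flipped on the part negative on `u`. -/
def signedOut (X : List (ZLat ι)) (r : Submodule ℝ (Amb ι)) (u : Amb ι) : List (ZLat ι) :=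
  (outSub X r).map (fun a => if 0 < dotR u (castV a) then a else -a)

/-- The special function `𝓟_{X\r}^F` for the face `F ∋ u`:
`(-1)^{|B|} τ_{-∑_{b∈B} b} (∏_{a∈A} ∑_k δ_{ka}) * (∏_{b∈B} ∑_k δ_{-kb})`. -/
def PF (X : List (ZLat ι)) (r : Submodule ℝ (Amb ι)) (u : Amb ι) : ZLat ι → ℤ :=
  fun γ => (-1) ^ (negPart X r u).length *
    partFn (signedOut X r u) (γ + (negPart X r u).sum)

/-- The support region `-∑_{b∈B} b + C(A, -B)` of `𝓟_{X\r}^F`, as a subset of `Γ`. -/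
def PFsupp (X : List (ZLat ι)) (r : Submodule ℝ (Amb ι)) (u : Amb ι) : Set (ZLat ι) :=
  {γ | castV (γ + (negPart X r u).sum) ∈ coneC (signedOut X r u)}

/-- Convolution of two functions on the lattice. -/
def conv (f g : ZLat ι → ℤ) : ZLat ι → ℤ := fun γ => ∑ᶠ μ, f (γ - μ) * g μ

/-- The union of all rational hyperplanes (inside the span of `Y`). -/
def hyperUnion (Y : List (ZLat ι)) : Set (Amb ι) :=
  {v | ∃ H, IsRational Y H ∧ Module.finrank ℝ H + 1 = Module.finrank ℝ (spanOf Y) ∧ v ∈ H}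

/-- A tope for `Y`: a connected component of the complement (in the span of `Y`) of the
union of the hyperplanes spanned by sublists of `Y`. -/
def IsTope (Y : List (ZLat ι)) (τ : Set (Amb ι)) : Prop :=
  ∃ v ∈ (spanOf Y : Set (Amb ι)) \ hyperUnion Y,
    τ = connectedComponentIn ((spanOf Y : Set (Amb ι)) \ hyperUnion Y) v

/-- The set of singular vectors: the union of the cones `C(Y)` over sublists `Y` of `X`
not spanning `V`. -/
def singSet (X : List (ZLat ι)) : Set (Amb ι) :=
  {v | ∃ Y : List (ZLat ι), (∀ a ∈ Y, a ∈ X) ∧ spanOf Y ≠ ⊤ ∧ v ∈ coneC Y}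

/-- A big cell: a connected component of the complement of the set of singular vectors. -/
def IsBigCell (X : List (ZLat ι)) (c : Set (Amb ι)) : Prop :=
  ∃ v ∈ (singSet X)ᶜ, c = connectedComponentIn (singSet X)ᶜ v

/-- Minkowski difference of sets, `A - B`. -/
def sdiffSet (A B : Set (Amb ι)) : Set (Amb ι) := {x | ∃ a ∈ A, ∃ b ∈ B, x = a - b}

set_option linter.unusedSectionVars false

namespace PFaux

variable {ι : Type*} [Fintype ι]

/-- castV as an AddMonoidHom. -/
def castVHom : ZLat ι →+ Amb ι where
  toFun := castV
  map_zero' := by funext i; simp [castV]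
  map_add' := fun a b => by funext i; simp only [castV, Pi.add_apply, Int.cast_add]

lemma castV_eq_hom (γ : ZLat ι) : castV γ = castVHom γ := rfl

lemma castV_add (a b : ZLat ι) : castV (a + b) = castV a + castV b := castVHom.map_add a b
lemma castV_sub (a b : ZLat ι) : castV (a - b) = castV a - castV b := castVHom.map_sub a b
lemma castV_neg (a : ZLat ι) : castV (-a) = - castV a := castVHom.map_neg a

/-- dotR in the second variable as a LinearMap. -/
def dotL (u : Amb ι) : Amb ι →ₗ[ℝ] ℝ where
  toFun v := dotR u v
  map_add' a b := by simp [dotR, Pi.add_apply, mul_add, Finset.sum_add_distrib]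
  map_smul' c v := by
    simp [dotR, Finset.mul_sum]; congr 1; funext i; ring

lemma dotR_eq (u v : Amb ι) : dotR u v = dotL u v := rfl

lemma nab_comm (a b : ZLat ι) (f : ZLat ι → ℤ) : nab a (nab b f) = nab b (nab a f) := by
  funext x
  simp only [nab]
  have : x - a - b = x - b - a := by abel
  rw [this]; ring

lemma nabL_cons (a : ZLat ι) (L : List (ZLat ι)) (f : ZLat ι → ℤ) :
    nabL (a :: L) f = nab a (nabL L f) := rfl

lemma nabL_append (L₁ L₂ : List (ZLat ι)) (f : ZLat ι → ℤ) :
    nabL (L₁ ++ L₂) f = nabL L₁ (nabL L₂ f) := List.foldr_append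

lemma nabL_perm {L L' : List (ZLat ι)} (h : L.Perm L') (f : ZLat ι → ℤ) :
    nabL L f = nabL L' f := by
  induction h with
  | nil => rfl
  | cons a _ ih => rw [nabL_cons, nabL_cons, ih]
  | swap a b L => rw [nabL_cons, nabL_cons, nabL_cons, nabL_cons, nab_comm]
  | trans _ _ ih₁ ih₂ => rw [ih₁, ih₂]

/-- The key finiteness condition for convolutions. -/
def FinConv (f g : ZLat ι → ℤ) : Prop :=
  ∀ γ : ZLat ι, {μ | f (γ - μ) * g μ ≠ 0}.Finite

lemma finConv_nab_left {f g : ZLat ι → ℤ} (h : FinConv f g) (a : ZLat ι) :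
    FinConv (nab a f) g := by
  intro γ
  refine ((h γ).union (h (γ - a))).subset ?_
  intro μ hμ
  simp only [Set.mem_setOf_eq, nab, Set.mem_union] at *
  by_cases h1 : f (γ - μ) * g μ = 0
  · right
    have : γ - μ - a = γ - a - μ := by abel
    rw [this] at hμ
    intro h2
    apply hμ; rw [sub_mul, h2]
    rw [h1]; ring
  · left; exact h1

lemma finConv_nab_right {f g : ZLat ι → ℤ} (h : FinConv f g) (a : ZLat ι) :
    FinConv f (nab a g) := by
  intro γ
  have hsub : {μ | f (γ - μ) * nab a g μ ≠ 0} ⊆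
      {μ | f (γ - μ) * g μ ≠ 0} ∪ (fun x => x + a) '' {μ | f (γ - a - μ) * g μ ≠ 0} := by
    intro μ hμ
    simp only [Set.mem_setOf_eq, nab, Set.mem_union, Set.mem_image] at *
    by_cases h1 : f (γ - μ) * g μ = 0
    · right
      refine ⟨μ - a, ?_, sub_add_cancel μ a⟩
      have e : γ - a - (μ - a) = γ - μ := by abel
      rw [e]
      intro h2
      apply hμ; rw [mul_sub, h2]
      rw [h1]; ring
    · left; exact h1
  exact ((h γ).union ((h (γ - a)).image _)).subset hsub

lemma nab_conv_left {f g : ZLat ι → ℤ} (h : FinConv f g) (a : ZLat ι) :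
    nab a (conv f g) = conv (nab a f) g := by
  funext γ
  have h1 : (support fun μ => f (γ - μ) * g μ).Finite := h γ
  have h2 : (support fun μ => f (γ - a - μ) * g μ).Finite := h (γ - a)
  simp only [nab, conv]
  rw [← finsum_sub_distrib h1 h2]
  congr 1; funext μ
  have e : γ - μ - a = γ - a - μ := by abel
  rw [sub_mul, e]

lemma nab_conv_right {f g : ZLat ι → ℤ} (h : FinConv f g) (a : ZLat ι) :
    nab a (conv f g) = conv f (nab a g) := by
  funext γ
  have h1 : (support fun μ => f (γ - μ) * g μ).Finite := h γ
  have h2 : (support fun μ => f (γ - a - μ) * g μ).Finite := h (γ - a)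
  have h2' : (support fun μ => f (γ - μ) * g (μ - a)).Finite := by
    refine (h2.image (fun x => x + a)).subset ?_
    intro μ hμ
    refine ⟨μ - a, ?_, sub_add_cancel μ a⟩
    simpa [show γ - a - (μ - a) = γ - μ from by abel] using hμ
  have e2 : ∑ᶠ (μ : ZLat ι), f (γ - a - μ) * g μ = ∑ᶠ μ, f (γ - μ) * g (μ - a) := by
    rw [← finsum_comp_equiv (Equiv.addRight a) (f := fun ν => f (γ - ν) * g (ν - a))]
    congr 1; funext μ
    simp only [Equiv.coe_addRight]
    rw [show γ - (μ + a) = γ - a - μ from by abel, add_sub_cancel_right]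
  simp only [nab, conv]
  rw [e2, ← finsum_sub_distrib h1 h2']
  congr 1; funext μ
  rw [mul_sub]

lemma finConv_nabL_left {f g : ZLat ι → ℤ} (h : FinConv f g) (L : List (ZLat ι)) :
    FinConv (nabL L f) g := by
  induction L with
  | nil => exact h
  | cons b L ih => exact finConv_nab_left ih b

lemma finConv_nabL_right {f g : ZLat ι → ℤ} (h : FinConv f g) (L : List (ZLat ι)) :
    FinConv f (nabL L g) := by
  induction L with
  | nil => exact h
  | cons b L ih => exact finConv_nab_right ih b

lemma nabL_conv_left {f g : ZLat ι → ℤ} (h : FinConv f g) (L : List (ZLat ι)) :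
    nabL L (conv f g) = conv (nabL L f) g := by
  induction L with
  | nil => rfl
  | cons a L ih =>
    rw [nabL_cons, ih, nab_conv_left (finConv_nabL_left h L), nabL_cons]

lemma nabL_conv_right {f g : ZLat ι → ℤ} (h : FinConv f g) (L : List (ZLat ι)) :
    nabL L (conv f g) = conv f (nabL L g) := by
  induction L with
  | nil => rfl
  | cons a L ih =>
    rw [nabL_cons, ih, nab_conv_right (finConv_nabL_right h L), nabL_cons]

lemma conv_delta (g : ZLat ι → ℤ) : conv delta0 g = g := by
  funext γ
  rw [conv, finsum_eq_single _ γ]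
  · simp [delta0]
  · intro μ hμ
    have : γ - μ ≠ 0 := fun h => hμ (by linear_combination (norm := abel) -h)
    simp [delta0, this]

lemma support_conv {f g : ZLat ι → ℤ} {s : Submodule ℝ (Amb ι)}
    (hf : support f ⊆ {γ | castV γ ∈ s}) (hg : support g ⊆ {γ | castV γ ∈ s}) :
    support (conv f g) ⊆ {γ | castV γ ∈ s} := by
  intro γ hγ
  simp only [support, Set.mem_setOf_eq, conv] at hγ ⊢
  by_contra hns
  apply hγ
  apply finsum_eq_zero_of_forall_eq_zero
  intro μ
  by_cases h1 : f (γ - μ) = 0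
  · rw [h1, zero_mul]
  by_cases h2 : g μ = 0
  · rw [h2, mul_zero]
  exfalso
  apply hns
  have m1 : castV (γ - μ) ∈ s := hf h1
  have m2 : castV μ ∈ s := hg h2
  have := s.add_mem m1 m2
  rwa [castV_sub, sub_add_cancel] at this

end PFaux

namespace PFaux

variable {ι : Type*} [Fintype ι]

/-- The set of representations counted by `partFn`. -/
def reps (Y : List (ZLat ι)) (γ : ZLat ι) : Type _ :=
  {k : Fin Y.length → ℕ // ∑ i, (k i : ℤ) • Y.get i = γ}

lemma partFn_def (Y : List (ZLat ι)) (γ : ZLat ι) :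
    partFn Y γ = (Nat.card (reps Y γ) : ℤ) := rfl

lemma sum_succ (y : ZLat ι) (Y : List (ZLat ι)) (k : Fin (Y.length + 1) → ℕ) :
    ∑ i : Fin (Y.length + 1), (k i : ℤ) • (y :: Y).get i
      = (k 0 : ℤ) • y + ∑ i : Fin Y.length, (k i.succ : ℤ) • Y.get i := by
  rw [Fin.sum_univ_succ]
  rfl

/-- Dot pairing with a sum of representations. -/
lemma dot_rep (u : Amb ι) (Y : List (ZLat ι)) (k : Fin Y.length → ℕ) :
    dotR u (castV (∑ i, (k i : ℤ) • Y.get i))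
      = ∑ i, (k i : ℝ) * dotR u (castV (Y.get i)) := by
  rw [castV_eq_hom, dotR_eq, map_sum, map_sum]
  congr 1; funext i
  rw [map_zsmul, map_zsmul, zsmul_eq_mul, dotR_eq]
  push_cast
  rfl

lemma reps_finite {u : Amb ι} {Y : List (ZLat ι)}
    (hY : ∀ a ∈ Y, 0 < dotR u (castV a)) (γ : ZLat ι) : Finite (reps Y γ) := by
  set d : Fin Y.length → ℝ := fun i => dotR u (castV (Y.get i)) with hd
  have hdpos : ∀ i, 0 < d i := fun i => hY _ (Y.get_mem i)
  set M : ℝ := dotR u (castV γ) with hM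
  have : {k : Fin Y.length → ℕ | ∑ i, (k i : ℤ) • Y.get i = γ}.Finite := by
    refine (Set.Finite.pi (t := fun i => Set.Iic (⌈M / d i⌉₊))
      (fun i => Set.finite_Iic _)).subset ?_
    intro k hk
    simp only [Set.mem_setOf_eq] at hk
    have hsum : ∑ i, (k i : ℝ) * d i = M := by
      rw [← dot_rep u Y k, hk]
    intro i _
    simp only [Set.mem_Iic]
    have h1 : (k i : ℝ) * d i ≤ M := by
      rw [← hsum]
      refine Finset.single_le_sum (f := fun j => (k j : ℝ) * d j)
        (fun j _ => mul_nonneg (Nat.cast_nonneg _) (hdpos j).le) (Finset.mem_univ i)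
    have h2 : (k i : ℝ) ≤ M / d i := (le_div_iff₀ (hdpos i)).2 h1
    calc k i = ⌈(k i : ℝ)⌉₊ := (Nat.ceil_natCast _).symm
      _ ≤ ⌈M / d i⌉₊ := Nat.ceil_mono h2
  exact Set.finite_coe_iff.2 this

lemma exists_rep_of_partFn_ne_zero {Y : List (ZLat ι)} {γ : ZLat ι}
    (h : partFn Y γ ≠ 0) : ∃ k : Fin Y.length → ℕ, ∑ i, (k i : ℤ) • Y.get i = γ := by
  by_contra hc
  push_neg at hc
  apply h
  have : Nat.card (reps Y γ) = 0 := Nat.card_eq_zero.2 (Or.inl ⟨fun k => hc k.1 k.2⟩)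
  rw [partFn_def, this]
  rfl

lemma partFn_nil (γ : ZLat ι) : partFn ([] : List (ZLat ι)) γ = delta0 γ := by
  rw [partFn_def, delta0]
  by_cases h : γ = 0
  · subst h
    simp only [if_pos rfl]
    have : Unique (reps ([] : List (ZLat ι)) 0) :=
      ⟨⟨⟨fun i => i.elim0, by simp⟩⟩, fun a => Subtype.ext (funext fun i => i.elim0)⟩
    rw [Nat.card_unique]
    rfl
  · rw [if_neg h]
    have he : IsEmpty (reps ([] : List (ZLat ι)) γ) := by
      refine ⟨fun k => h ?_⟩
      have := k.2
      simpa using this.symm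
    have : Nat.card (reps ([] : List (ZLat ι)) γ) = 0 := Nat.card_eq_zero.2 (Or.inl he)
    rw [this]
    rfl

/-- Pairs version of representations of a cons list. -/
def reps' (y : ZLat ι) (Y : List (ZLat ι)) (γ : ZLat ι) : Type _ :=
  {p : ℕ × (Fin Y.length → ℕ) // (p.1 : ℤ) • y + ∑ i, (p.2 i : ℤ) • Y.get i = γ}

def repsConsEquiv (y : ZLat ι) (Y : List (ZLat ι)) (γ : ZLat ι) :
    reps (y :: Y) γ ≃ reps' y Y γ where
  toFun k := ⟨(k.1 (0 : Fin (Y.length + 1)), fun i => k.1 i.succ),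
    by rw [← sum_succ]; exact k.2⟩
  invFun p := ⟨Fin.cons p.1.1 p.1.2, by
    have := sum_succ y Y (Fin.cons p.1.1 p.1.2)
    rw [show ∑ i : Fin (y::Y).length, ((Fin.cons p.1.1 p.1.2 : Fin (Y.length+1) → ℕ) i : ℤ)
        • (y :: Y).get i = _ from this]
    simpa only [Fin.cons_zero, Fin.cons_succ] using p.2⟩
  left_inv k := by
    apply Subtype.ext
    funext i
    refine Fin.cases (motive := fun i : Fin (Y.length + 1) =>
      (Fin.cons (k.1 (0 : Fin (Y.length+1))) (fun j : Fin Y.length => k.1 j.succ) :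
        Fin (Y.length + 1) → ℕ) i = k.1 i) ?_ (fun j => ?_) i
    · simp
    · simp
  right_inv p := by
    apply Subtype.ext
    refine Prod.ext ?_ ?_
    · simp
    · funext i; simp

def repsConsSigma (y : ZLat ι) (Y : List (ZLat ι)) (γ : ZLat ι) :
    reps (y :: Y) γ ≃ Σ c : ℕ, reps Y (γ - (c : ℤ) • y) :=
  (repsConsEquiv y Y γ).trans
    { toFun := fun p => ⟨p.1.1, ⟨p.1.2, by rw [eq_sub_iff_add_eq, add_comm]; exact p.2⟩⟩
      invFun := fun q => ⟨(q.1, q.2.1), by rw [add_comm, ← eq_sub_iff_add_eq]; exact q.2.2⟩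
      left_inv := fun p => rfl
      right_inv := fun q => rfl }

lemma reps_perm {Y Y' : List (ZLat ι)} (h : Y.Perm Y') :
    ∀ γ : ZLat ι, Nonempty (reps Y γ ≃ reps Y' γ) := by
  induction h with
  | nil => exact fun γ => ⟨Equiv.refl _⟩
  | cons a h ih =>
    intro γ
    exact ⟨(repsConsSigma a _ γ).trans
      ((Equiv.sigmaCongrRight fun c => Classical.choice (ih _)).trans
        (repsConsSigma a _ γ).symm)⟩
  | swap a b Y =>
    intro γ
    refine ⟨(repsConsSigma b (a :: Y) γ).trans
      ((Equiv.sigmaCongrRight fun c => repsConsSigma a Y _).trans (Equiv.trans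
        (?_ : (Σ c : ℕ, Σ e : ℕ, reps Y (γ - (c:ℤ)•b - (e:ℤ)•a)) ≃
          (Σ e : ℕ, Σ c : ℕ, reps Y (γ - (e:ℤ)•a - (c:ℤ)•b)))
        ((Equiv.sigmaCongrRight fun e => (repsConsSigma b Y _).symm).trans
          (repsConsSigma a (b :: Y) γ).symm)))⟩
    exact
      { toFun := fun q => ⟨q.2.1, q.1, ⟨q.2.2.1, q.2.2.2.trans (by abel)⟩⟩
        invFun := fun q => ⟨q.2.1, q.1, ⟨q.2.2.1, q.2.2.2.trans (by abel)⟩⟩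
        left_inv := fun q => rfl
        right_inv := fun q => rfl }
  | trans h₁ h₂ ih₁ ih₂ =>
    exact fun γ => ⟨(Classical.choice (ih₁ γ)).trans (Classical.choice (ih₂ γ))⟩

lemma partFn_perm {Y Y' : List (ZLat ι)} (h : Y.Perm Y') : partFn Y = partFn Y' := by
  funext γ
  rw [partFn_def, partFn_def]
  exact congrArg _ (Nat.card_congr (Classical.choice (reps_perm h γ)))

end PFaux

namespace PFaux

variable {ι : Type*} [Fintype ι]

def zeroPart (y : ZLat ι) (Y : List (ZLat ι)) (γ : ZLat ι) :
    {x : reps' y Y γ // x.1.1 = 0} ≃ reps Y γ where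
  toFun x := ⟨x.1.1.2, by
    have e := x.1.2
    rw [x.2] at e
    simpa using e⟩
  invFun k := ⟨⟨(0, k.1), by simpa using k.2⟩, rfl⟩
  left_inv := by
    rintro ⟨⟨⟨c, t⟩, hp⟩, h0⟩
    simp only at h0
    subst h0
    rfl
  right_inv k := rfl

def posPart (y : ZLat ι) (Y : List (ZLat ι)) (γ : ZLat ι) :
    {x : reps' y Y γ // ¬ x.1.1 = 0} ≃ reps' y Y (γ - y) where
  toFun x := ⟨(x.1.1.1 - 1, x.1.1.2), by
    rw [Nat.cast_sub (Nat.one_le_iff_ne_zero.2 x.2), Nat.cast_one, sub_smul, one_smul,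
      sub_add_eq_add_sub, x.1.2]⟩
  invFun p := ⟨⟨(p.1.1 + 1, p.1.2), by
    have h2 := p.2
    push_cast
    rw [add_smul, one_smul, add_right_comm, h2, sub_add_cancel]⟩, by simp⟩
  left_inv := by
    rintro ⟨⟨⟨c, t⟩, hp⟩, h0⟩
    simp only at h0
    apply Subtype.ext
    apply Subtype.ext
    simp [Nat.sub_add_cancel (Nat.one_le_iff_ne_zero.2 h0)]
  right_inv := by
    rintro ⟨⟨c, t⟩, hp⟩
    apply Subtype.ext
    simp

lemma nab_partFn_cons {u : Amb ι} {y : ZLat ι} {Y : List (ZLat ι)}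
    (hy : 0 < dotR u (castV y)) (hY : ∀ a ∈ Y, 0 < dotR u (castV a)) :
    nab y (partFn (y :: Y)) = partFn Y := by
  have hall : ∀ a ∈ (y :: Y), 0 < dotR u (castV a) := by
    intro a ha
    rcases List.mem_cons.1 ha with h | h
    · subst h; exact hy
    · exact hY a h
  funext γ
  haveI F1 : Finite (reps (y :: Y) γ) := reps_finite hall γ
  haveI F1' : Finite (reps (y :: Y) (γ - y)) := reps_finite hall (γ - y)
  haveI F0 : Finite (reps Y γ) := reps_finite hY γ
  haveI F2 : Finite (reps' y Y γ) := Finite.of_equiv _ (repsConsEquiv y Y γ)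
  haveI F2' : Finite (reps' y Y (γ - y)) := Finite.of_equiv _ (repsConsEquiv y Y (γ - y))
  have key : Nat.card (reps' y Y γ)
      = Nat.card (reps' y Y (γ - y)) + Nat.card (reps Y γ) := by
    calc Nat.card (reps' y Y γ)
        = Nat.card ({x : reps' y Y γ // x.1.1 = 0} ⊕ {x : reps' y Y γ // ¬ x.1.1 = 0}) :=
          (Nat.card_congr (Equiv.sumCompl _)).symm
      _ = Nat.card {x : reps' y Y γ // x.1.1 = 0} + Nat.card {x : reps' y Y γ // ¬ x.1.1 = 0} :=
          Nat.card_sum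
      _ = Nat.card (reps Y γ) + Nat.card (reps' y Y (γ - y)) := by
          rw [Nat.card_congr (zeroPart y Y γ), Nat.card_congr (posPart y Y γ)]
      _ = Nat.card (reps' y Y (γ - y)) + Nat.card (reps Y γ) := Nat.add_comm _ _
  have e1 : Nat.card (reps (y :: Y) γ) = Nat.card (reps' y Y γ) :=
    Nat.card_congr (repsConsEquiv y Y γ)
  have e2 : Nat.card (reps (y :: Y) (γ - y)) = Nat.card (reps' y Y (γ - y)) :=
    Nat.card_congr (repsConsEquiv y Y (γ - y))
  show partFn (y :: Y) γ - partFn (y :: Y) (γ - y) = partFn Y γ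
  rw [partFn_def, partFn_def, partFn_def, e1, e2, key]
  push_cast
  ring

/-- The negative part of a list relative to `u`. -/
def negOf (u : Amb ι) (W : List (ZLat ι)) : List (ZLat ι) :=
  W.filter (fun a => decide (dotR u (castV a) < 0))

def signedOf (u : Amb ι) (W : List (ZLat ι)) : List (ZLat ι) :=
  W.map (fun a => if 0 < dotR u (castV a) then a else -a)

/-- Generalized special function. -/
def Q (u : Amb ι) (W : List (ZLat ι)) : ZLat ι → ℤ :=
  fun γ => (-1) ^ (negOf u W).length * partFn (signedOf u W) (γ + (negOf u W).sum)

lemma PF_eq_Q (X : List (ZLat ι)) (r : Submodule ℝ (Amb ι)) (u : Amb ι) :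
    PF X r u = Q u (outSub X r) := rfl

lemma dot_neg (u : Amb ι) (a : ZLat ι) : dotR u (castV (-a)) = - dotR u (castV a) := by
  rw [castV_neg, dotR_eq, dotR_eq, map_neg]

lemma signedOf_pos {u : Amb ι} {W : List (ZLat ι)}
    (hW : ∀ b ∈ W, dotR u (castV b) ≠ 0) :
    ∀ b ∈ signedOf u W, 0 < dotR u (castV b) := by
  intro b hb
  rcases List.mem_map.1 hb with ⟨a, ha, rfl⟩
  by_cases h : 0 < dotR u (castV a)
  · rwa [if_pos h]
  · rw [if_neg h, dot_neg]
    have : dotR u (castV a) < 0 := lt_of_le_of_ne (not_lt.1 h) (hW a ha)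
    linarith

lemma Q_perm {u : Amb ι} {W W' : List (ZLat ι)} (h : W.Perm W') : Q u W = Q u W' := by
  funext γ
  have h1 : (negOf u W).Perm (negOf u W') := h.filter _
  rw [Q, Q, partFn_perm (show (signedOf u W).Perm (signedOf u W') from h.map _),
    h1.length_eq, h1.sum_eq]

lemma Q_nil (u : Amb ι) : Q u ([] : List (ZLat ι)) = delta0 := by
  funext γ
  rw [Q]
  show (-1) ^ (List.length []) * partFn ([] : List (ZLat ι)) (γ + List.sum []) = _
  rw [List.sum_nil, add_zero, partFn_nil, List.length_nil, pow_zero, one_mul]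

lemma nab_Q_cons {u : Amb ι} {a : ZLat ι} {W : List (ZLat ι)}
    (ha : dotR u (castV a) ≠ 0) (hW : ∀ b ∈ W, dotR u (castV b) ≠ 0) :
    nab a (Q u (a :: W)) = Q u W := by
  have hsW : ∀ b ∈ signedOf u W, 0 < dotR u (castV b) := signedOf_pos hW
  by_cases h : 0 < dotR u (castV a)
  · have hneg : negOf u (a :: W) = negOf u W := by
      rw [negOf, List.filter_cons_of_neg]
      · rfl
      · simpa using not_lt.2 (le_of_lt h)
    have hsgn : signedOf u (a :: W) = a :: signedOf u W := by
      rw [signedOf, List.map_cons, if_pos h]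
      rfl
    have hrec := nab_partFn_cons (u := u) h hsW
    funext γ
    have hr := congrFun hrec (γ + (negOf u W).sum)
    simp only [nab] at hr ⊢
    rw [Q, Q, Q, hneg, hsgn]
    rw [show γ - a + (negOf u W).sum = γ + (negOf u W).sum - a from by abel]
    rw [← mul_sub, hr]
  · have hlt : dotR u (castV a) < 0 := lt_of_le_of_ne (not_lt.1 h) ha
    have hneg : negOf u (a :: W) = a :: negOf u W := by
      rw [negOf, List.filter_cons_of_pos]
      · rfl
      · simpa using hlt
    have hsgn : signedOf u (a :: W) = (-a) :: signedOf u W := by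
      rw [signedOf, List.map_cons, if_neg h]
      rfl
    have hma : 0 < dotR u (castV (-a)) := by rw [dot_neg]; linarith
    have hrec := nab_partFn_cons (u := u) hma hsW
    funext γ
    have hr := congrFun hrec (γ + (negOf u W).sum)
    simp only [nab] at hr ⊢
    rw [Q, Q, Q, hneg, hsgn]
    rw [List.length_cons, List.sum_cons]
    rw [show γ + (a + (negOf u W).sum) = (γ + (negOf u W).sum) - (-a) from by abel]
    rw [show γ - a + (a + (negOf u W).sum) = γ + (negOf u W).sum from by abel]
    rw [pow_succ]
    set p := partFn ((-a) :: signedOf u W)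
    set δ := γ + (negOf u W).sum
    have hthis : p δ - p (δ - (-a)) = partFn (signedOf u W) δ := hr
    linear_combination ((-1 : ℤ)) ^ (negOf u W).length * hthis

lemma nabL_Q {u : Amb ι} : ∀ (L W' W : List (ZLat ι)),
    (∀ b ∈ W, dotR u (castV b) ≠ 0) → W.Perm (L ++ W') → nabL L (Q u W) = Q u W' := by
  intro L
  induction L with
  | nil =>
    intro W' W hW hperm
    simpa [nabL] using Q_perm hperm
  | cons a L ih =>
    intro W' W hW hperm
    have hperm2 : W.Perm (L ++ (a :: W')) :=
      hperm.trans (List.perm_middle).symm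
    have hmem : ∀ b ∈ (a :: W'), dotR u (castV b) ≠ 0 := by
      intro b hb
      exact hW b (hperm2.symm.subset (List.mem_append_right L hb))
    rw [nabL_cons, ih (a :: W') W hW hperm2, nab_Q_cons (hmem a List.mem_cons_self)]
    intro b hb
    exact hmem b (List.mem_cons_of_mem a hb)

lemma support_Q_subset {u : Amb ι} {s : Submodule ℝ (Amb ι)} {W : List (ZLat ι)}
    (hWs : ∀ a ∈ W, castV a ∈ s) : support (Q u W) ⊆ {γ | castV γ ∈ s} := by
  intro γ hγ
  simp only [support, Set.mem_setOf_eq, Q] at hγ ⊢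
  have hp : partFn (signedOf u W) (γ + (negOf u W).sum) ≠ 0 := by
    intro h0
    rw [h0, mul_zero] at hγ
    exact hγ rfl
  obtain ⟨k, hk⟩ := exists_rep_of_partFn_ne_zero hp
  have hsgn : ∀ b ∈ signedOf u W, castV b ∈ s := by
    intro b hb
    rcases List.mem_map.1 hb with ⟨c, hc, rfl⟩
    by_cases h : 0 < dotR u (castV c)
    · rw [if_pos h]; exact hWs c hc
    · rw [if_neg h, castV_neg]; exact s.neg_mem (hWs c hc)
  have h1 : castV (γ + (negOf u W).sum) ∈ s := by
    rw [← hk, castV_eq_hom, map_sum]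
    refine Submodule.sum_mem s fun i _ => ?_
    rw [map_zsmul]
    exact zsmul_mem (hsgn _ (List.get_mem _ _)) _
  have h2 : castV ((negOf u W).sum) ∈ s := by
    rw [castV_eq_hom, map_list_sum]
    refine list_sum_mem fun x hx => ?_
    rcases List.mem_map.1 hx with ⟨c, hc, rfl⟩
    exact hWs c (List.mem_of_mem_filter hc)
  have := s.sub_mem h1 h2
  rwa [← castV_sub, add_sub_cancel_right] at this

lemma finConv_Q {u : Amb ι} {r : Submodule ℝ (Amb ι)} {W : List (ZLat ι)}
    {g : ZLat ι → ℤ} (hW : ∀ b ∈ W, dotR u (castV b) ≠ 0)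
    (hur : ∀ v ∈ r, dotR u v = 0) (hg : support g ⊆ {γ | castV γ ∈ r}) :
    FinConv (Q u W) g := by
  intro γ
  set sW := signedOf u W with hsW
  set σ := (negOf u W).sum with hσ
  set d : Fin sW.length → ℝ := fun i => dotR u (castV (sW.get i)) with hd
  have hdpos : ∀ i, 0 < d i := fun i => signedOf_pos hW _ (sW.get_mem i)
  set M : ℝ := dotR u (castV (γ + σ)) with hM
  set N : Fin sW.length → ℕ := fun i => ⌈M / d i⌉₊ with hN
  have key : {μ | Q u W (γ - μ) * g μ ≠ 0} ⊆
      (fun k : Fin sW.length → ℕ => γ + σ - ∑ i, (k i : ℤ) • sW.get i) ''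
        (Set.univ.pi fun i => Set.Iic (N i)) := by
    intro μ hμ
    simp only [Set.mem_setOf_eq] at hμ
    have hQ : Q u W (γ - μ) ≠ 0 := fun h => hμ (by rw [h, zero_mul])
    have hgμ : g μ ≠ 0 := fun h => hμ (by rw [h, mul_zero])
    have hμr : castV μ ∈ r := hg hgμ
    have hp : partFn sW (γ - μ + σ) ≠ 0 := by
      intro h0
      apply hQ
      rw [Q, ← hsW, ← hσ, h0, mul_zero]
    obtain ⟨k, hk⟩ := exists_rep_of_partFn_ne_zero hp
    refine ⟨k, ?_, ?_⟩
    · intro i _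
      simp only [Set.mem_Iic, hN]
      have hdot : ∑ i, (k i : ℝ) * d i = M := by
        rw [hd, ← dot_rep u sW k, hk, hM]
        have : castV (γ - μ + σ) = castV (γ + σ) - castV μ := by
          rw [← castV_sub]
          congr 1
          abel
        rw [this, dotR_eq, dotR_eq, map_sub, ← dotR_eq, ← dotR_eq, hur _ hμr, sub_zero]
      have h1 : (k i : ℝ) * d i ≤ M := by
        rw [← hdot]
        refine Finset.single_le_sum (f := fun j => (k j : ℝ) * d j)
          (fun j _ => mul_nonneg (Nat.cast_nonneg _) (hdpos j).le) (Finset.mem_univ i)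
      have h2 : (k i : ℝ) ≤ M / d i := (le_div_iff₀ (hdpos i)).2 h1
      calc k i = ⌈(k i : ℝ)⌉₊ := (Nat.ceil_natCast _).symm
        _ ≤ ⌈M / d i⌉₊ := Nat.ceil_mono h2
    · show γ + σ - ∑ i, (k i : ℤ) • sW.get i = μ
      rw [hk]
      abel
  refine Set.Finite.subset ?_ key
  exact Set.Finite.image _ (Set.Finite.pi fun i => Set.finite_Iic _)

end PFaux

namespace PFaux

variable {ι : Type*} [Fintype ι]

lemma outSub_ne {X : List (ZLat ι)} {r : Submodule ℝ (Amb ι)} {u : Amb ι}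
    (hu : Reg X r u) : ∀ b ∈ outSub X r, dotR u (castV b) ≠ 0 := by
  intro b hb
  rw [outSub, List.mem_filter] at hb
  exact hu.2 b hb.1 (of_decide_eq_true hb.2)

theorem main_one {X : List (ZLat ι)} {r : Submodule ℝ (Amb ι)} {u : Amb ι}
    (hu : Reg X r u) {g : ZLat ι → ℤ} (hg : memFrel X r g) :
    memF X (conv (PF X r u) g) ∧ nabOut X r (conv (PF X r u) g) = g := by
  set W := outSub X r with hWdef
  have hW : ∀ b ∈ W, dotR u (castV b) ≠ 0 := outSub_ne hu
  have hFC : FinConv (Q u W) g := finConv_Q hW hu.1 hg.1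
  constructor
  · -- memF
    intro s _hs
    set ps : ZLat ι → Bool := fun a => decide (castV a ∉ s) with hps
    set pr : ZLat ι → Bool := fun a => decide (castV a ∉ r) with hpr
    set pins : ZLat ι → Bool := fun a => decide (castV a ∈ s) with hpins
    set L1 : List (ZLat ι) := W.filter ps with hL1
    set M1 : List (ZLat ι) := W.filter pins with hM1
    set L2 : List (ZLat ι) := (inSub X r).filter ps with hL2
    -- permutation of W
    have perm1 : W.Perm (L1 ++ M1) := by
      refine (List.filter_append_perm ps W).symm.trans ?_
      rw [show W.filter (fun x => !ps x) = M1 from ?_]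
      rw [hM1]
      apply List.filter_congr
      intro a _
      simp [hps, hpins]
    -- permutation of X \ s
    have perm0 : (outSub X s).Perm (L1 ++ L2) := by
      have E1 := (List.filter_append_perm pr (outSub X s)).symm
      have eA : (outSub X s).filter pr = L1 := by
        rw [hL1, hWdef]
        simp only [outSub, List.filter_filter]
        exact List.filter_congr fun a _ => Bool.and_comm _ _
      have eB : (outSub X s).filter (fun a => !pr a) = L2 := by
        rw [hL2]
        simp only [outSub, inSub, List.filter_filter]
        refine List.filter_congr fun a _ => ?_
        simp [hpr, hps, Bool.and_comm, decide_not]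
      rw [eA, eB] at E1
      exact E1
    -- the L2 side
    set t : Submodule ℝ (Amb ι) := spanOf ((inSub X r).filter pins) with ht
    have hts : t ≤ s := by
      rw [ht, spanOf]
      apply Submodule.span_le.2
      rintro v ⟨a, ha, rfl⟩
      exact of_decide_eq_true (List.mem_filter.1 ha).2
    have heq : L2 = outSub (inSub X r) t := by
      rw [hL2]
      simp only [outSub]
      apply List.filter_congr
      intro a ha
      rw [hps]
      rw [decide_eq_decide]
      apply not_congr
      constructor
      · intro hm
        apply Submodule.subset_span
        exact ⟨a, List.mem_filter.2 ⟨ha, decide_eq_true hm⟩, rfl⟩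
      · intro hmt
        exact hts hmt
    have hrat : IsRational (inSub X r) t :=
      ⟨(inSub X r).filter pins, fun a ha => List.mem_of_mem_filter ha, rfl⟩
    have suppL2 : support (nabL L2 g) ⊆ {γ | castV γ ∈ s} := by
      have := hg.2 t hrat
      rw [nabOut, ← heq] at this
      exact this.trans fun γ hγ => hts hγ
    -- the M1 side
    have suppM1 : support (Q u M1) ⊆ {γ | castV γ ∈ s} := by
      apply support_Q_subset
      intro a ha
      exact of_decide_eq_true (List.mem_filter.1 ha).2
    -- main computation
    have step : nabOut X s (conv (PF X r u) g) = conv (Q u M1) (nabL L2 g) := by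
      rw [PF_eq_Q, ← hWdef, nabOut, nabL_perm perm0, nabL_append,
        nabL_conv_right hFC L2, nabL_conv_left (finConv_nabL_right hFC L2) L1,
        nabL_Q L1 M1 W hW perm1]
    rw [step]
    exact support_conv suppM1 suppL2
  · rw [PF_eq_Q, ← hWdef, nabOut, ← hWdef, nabL_conv_left hFC,
      nabL_Q W [] W hW (by simpa using List.Perm.refl W), Q_nil, conv_delta]

end PFaux

/-- The map `g ↦ 𝓟_{X\r}^F * g` is an injection of `𝓕(X∩r)` into `𝓕(X)`, and
`∇_{X\r}(𝓟_{X\r}^F * g) = g` for all `g ∈ 𝓕(X∩r)`. -/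
theorem PF_conv_inj {ι : Type*} [Fintype ι] (X : List (ZLat ι))
    (hX0 : ∀ a ∈ X, a ≠ 0) (hspan : spanOf X = ⊤)
    (r : Submodule ℝ (Amb ι)) (hr : IsRational X r) (u : Amb ι) (hu : Reg X r u) :
    (∀ g : ZLat ι → ℤ, memFrel X r g →
      memF X (conv (PF X r u) g) ∧ nabOut X r (conv (PF X r u) g) = g) ∧
    ∀ g₁ g₂ : ZLat ι → ℤ, memFrel X r g₁ → memFrel X r g₂ →
      conv (PF X r u) g₁ = conv (PF X r u) g₂ → g₁ = g₂ := by
  refine ⟨fun g hg => PFaux.main_one hu hg, ?_⟩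
  intro g₁ g₂ h₁ h₂ hconv
  rw [← (PFaux.main_one hu h₁).2, ← (PFaux.main_one hu h₂).2, hconv]
end
end

section
/- For every rational subspace r, the operator ∇_{X\r} maps F(X) surjectively onto F(X∩r). -/
open Function

attribute [local instance] Classical.propDecidable

noncomputable section

variable {ι : Type*} [Fintype ι]

set_option linter.unusedSectionVars false
set_option linter.unusedVariables false
set_option maxHeartbeats 1000000

section Aux
variable {ι : Type*} [Fintype ι]

-- basic castV lemmas
lemma castV_add (a b : ZLat ι) : castV (a + b) = castV a + castV b := by
  funext i; simp [castV]
lemma castV_sub (a b : ZLat ι) : castV (a - b) = castV a - castV b := by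
  funext i; simp [castV]
lemma castV_neg (a : ZLat ι) : castV (-a) = -castV a := by funext i; simp [castV]
lemma castV_zero : castV (0 : ZLat ι) = 0 := by funext i; simp [castV]

lemma castV_sum_smul {n : ℕ} (k : Fin n → ℕ) (v : Fin n → ZLat ι) :
    castV (∑ i, (k i : ℤ) • v i) = ∑ i, (k i : ℝ) • castV (v i) := by
  funext j
  simp only [castV, Finset.sum_apply, Pi.smul_apply, smul_eq_mul]
  push_cast
  rfl

lemma castV_list_sum (L : List (ZLat ι)) : castV L.sum = (L.map castV).sum := by
  induction L with
  | nil => simp [castV_zero]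
  | cons a L ih => simp [castV_add, ih]

-- dotR lemmas
lemma dotR_add (u v w : Amb ι) : dotR u (v + w) = dotR u v + dotR u w := by
  simp [dotR, mul_add, Finset.sum_add_distrib]
lemma dotR_sub (u v w : Amb ι) : dotR u (v - w) = dotR u v - dotR u w := by
  simp [dotR, mul_sub, Finset.sum_sub_distrib]
lemma dotR_neg (u v : Amb ι) : dotR u (-v) = -dotR u v := by
  simp [dotR]
lemma dotR_smul (u : Amb ι) (c : ℝ) (v : Amb ι) : dotR u (c • v) = c * dotR u v := by
  simp only [dotR, Pi.smul_apply, smul_eq_mul, Finset.mul_sum]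
  exact Finset.sum_congr rfl fun i _ => by ring
lemma dotR_zero (u : Amb ι) : dotR u (0 : Amb ι) = 0 := by simp [dotR]
lemma dotR_sum {n : ℕ} (u : Amb ι) (f : Fin n → Amb ι) :
    dotR u (∑ i, f i) = ∑ i, dotR u (f i) := by
  simp [dotR, Finset.mul_sum]
  exact Finset.sum_comm

-- nab lemmas
lemma nab_comm (a b : ZLat ι) (f : ZLat ι → ℤ) : nab a (nab b f) = nab b (nab a f) := by
  funext c
  simp only [nab]
  have : c - a - b = c - b - a := by abel
  rw [this]; ring

instance : LeftCommutative (nab (ι := ι)) := ⟨nab_comm⟩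

lemma nabL_cons (a : ZLat ι) (L : List (ZLat ι)) (f : ZLat ι → ℤ) :
    nabL (a :: L) f = nab a (nabL L f) := rfl

lemma nabL_append (L M : List (ZLat ι)) (f : ZLat ι → ℤ) :
    nabL (L ++ M) f = nabL L (nabL M f) := by
  simp [nabL, List.foldr_append]

lemma nab_nabL_comm (a : ZLat ι) (L : List (ZLat ι)) (f : ZLat ι → ℤ) :
    nab a (nabL L f) = nabL L (nab a f) := by
  induction L with
  | nil => rfl
  | cons b L ih => rw [nabL_cons, nab_comm, ih, nabL_cons]

lemma nabL_perm {L L' : List (ZLat ι)} (p : List.Perm L L') (f : ZLat ι → ℤ) :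
    nabL L f = nabL L' f := p.foldr_eq f

lemma nab_mul_left (a : ZLat ι) (c : ℤ) (h : ZLat ι → ℤ) :
    nab a (fun γ => c * h γ) = fun γ => c * nab a h γ := by
  funext γ; simp [nab]; ring

lemma nabL_mul_left (L : List (ZLat ι)) (c : ℤ) (h : ZLat ι → ℤ) :
    nabL L (fun γ => c * h γ) = fun γ => c * nabL L h γ := by
  induction L with
  | nil => rfl
  | cons a L ih => rw [nabL_cons, ih, nab_mul_left, nabL_cons]

lemma nab_shift (a v : ZLat ι) (h : ZLat ι → ℤ) :
    nab a (fun γ => h (γ + v)) = fun γ => nab a h (γ + v) := by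
  funext γ
  simp only [nab]
  congr 2
  abel

lemma nabL_shift (L : List (ZLat ι)) (v : ZLat ι) (h : ZLat ι → ℤ) :
    nabL L (fun γ => h (γ + v)) = fun γ => nabL L h (γ + v) := by
  induction L with
  | nil => rfl
  | cons a L ih => rw [nabL_cons, ih, nab_shift, nabL_cons]

-- generic filter-perm splitting
lemma filter_perm_split {α : Type*} (l : List α) (p q t : α → Bool)
    (h1 : ∀ a ∈ l, p a = (q a || t a)) (h2 : ∀ a ∈ l, ¬(q a = true ∧ t a = true)) :
    List.Perm (l.filter p) (l.filter q ++ l.filter t) := by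
  induction l with
  | nil => simp
  | cons a l ih =>
    have ih' := ih (fun a ha => h1 a (List.mem_cons_of_mem _ ha))
      (fun a ha => h2 a (List.mem_cons_of_mem _ ha))
    have h1a := h1 a (List.mem_cons_self)
    have h2a := h2 a (List.mem_cons_self)
    by_cases hq : q a = true
    · have ht : t a = false := by
        rcases Bool.eq_false_or_eq_true (t a) with h | h
        · exact absurd ⟨hq, h⟩ h2a
        · exact h
      have hp : p a = true := by rw [h1a, hq]; simp
      simp only [List.filter_cons, hp, hq, ht, if_true, cond_true, cond_false]
      simpa using ih'.cons a
    · have hq' : q a = false := by simpa using hq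
      by_cases ht : t a = true
      · have hp : p a = true := by rw [h1a, ht]; simp
        simp only [List.filter_cons, hp, hq', ht, cond_true, cond_false]
        exact ih'.cons a |>.trans (List.perm_middle.symm)
      · have ht' : t a = false := by simpa using ht
        have hp : p a = false := by rw [h1a, hq', ht']; rfl
        simp only [List.filter_cons, hp, hq', ht', cond_false]
        exact ih'

end Aux

section C2
variable {ι : Type*} [Fintype ι]

def sols (Y : List (ZLat ι)) (γ : ZLat ι) : Type _ :=
  {k : Fin Y.length → ℕ // ∑ i, (k i : ℤ) • Y.get i = γ}

lemma partFn_eq_card (Y : List (ZLat ι)) (γ : ZLat ι) :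
    partFn Y γ = Nat.card (sols Y γ) := rfl

lemma sols_sum_cons (x : ZLat ι) (Y : List (ZLat ι)) (k : Fin (Y.length + 1) → ℕ) :
    (∑ i : Fin (Y.length + 1), (k i : ℤ) • (x :: Y).get i)
      = (k 0 : ℤ) • x + ∑ i : Fin Y.length, (k i.succ : ℤ) • Y.get i := by
  rw [Fin.sum_univ_succ]
  rfl

def unconsSol (x : ZLat ι) (Y : List (ZLat ι)) (γ : ZLat ι) (k : sols (x :: Y) γ) :
    Σ m : ℕ, sols Y (γ - (m : ℤ) • x) :=
  let k' : Fin (Y.length + 1) → ℕ := k.1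
  ⟨k' 0, ⟨fun i => k' i.succ, by
    have h2 : (∑ i : Fin (Y.length + 1), (k' i : ℤ) • (x :: Y).get i) = γ := k.2
    rw [sols_sum_cons] at h2
    rw [← h2]; abel⟩⟩

def consSol (x : ZLat ι) (Y : List (ZLat ι)) (γ : ZLat ι)
    (p : Σ m : ℕ, sols Y (γ - (m : ℤ) • x)) : sols (x :: Y) γ :=
  ⟨(Fin.cons p.1 p.2.1 : Fin (Y.length + 1) → ℕ), by
    show (∑ i : Fin (Y.length + 1), ((Fin.cons p.1 p.2.1 : Fin (Y.length + 1) → ℕ) i : ℤ) • (x :: Y).get i) = γ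
    rw [sols_sum_cons]
    simp only [Fin.cons_zero, Fin.cons_succ]
    rw [p.2.2]; abel⟩

def consEquiv (x : ZLat ι) (Y : List (ZLat ι)) (γ : ZLat ι) :
    sols (x :: Y) γ ≃ (m : ℕ) × sols Y (γ - (m : ℤ) • x) where
  toFun := unconsSol x Y γ
  invFun := consSol x Y γ
  left_inv k := by
    apply Subtype.ext
    exact Fin.cons_self_tail (show Fin (Y.length + 1) → ℕ from k.1)
  right_inv p := by
    rcases p with ⟨m, k, hk⟩
    refine Sigma.ext ?_ ?_
    · show (Fin.cons m k : Fin (Y.length+1) → ℕ) 0 = m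
      simp
    · unfold sols
      rw [Subtype.heq_iff_coe_eq ?_]
      · show (fun i => (Fin.cons m k : Fin (Y.length+1) → ℕ) i.succ) = k
        funext i
        simp
      · intro x'
        show (∑ i : Fin Y.length, _ • Y.get i) = γ - ((Fin.cons m k : Fin (Y.length+1) → ℕ) 0 : ℤ) • x
          ↔ _
        simp


def sigmaComm' {G : ℕ → ℕ → Type*} : (Σ m : ℕ, Σ n : ℕ, G m n) ≃ (Σ n : ℕ, Σ m : ℕ, G m n) where
  toFun p := ⟨p.2.1, p.1, p.2.2⟩
  invFun p := ⟨p.2.1, p.1, p.2.2⟩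
  left_inv p := rfl
  right_inv p := rfl

lemma sols_perm_equiv {Y Y' : List (ZLat ι)} (p : List.Perm Y Y') :
    ∀ γ, Nonempty (sols Y γ ≃ sols Y' γ) := by
  induction p with
  | nil => exact fun γ => ⟨Equiv.refl _⟩
  | cons x p ih =>
    intro γ
    exact ⟨(consEquiv _ _ _).trans <|
      (Equiv.sigmaCongrRight fun m => (ih _).some).trans (consEquiv _ _ _).symm⟩
  | swap x y L =>
    intro γ
    refine ⟨(consEquiv _ _ _).trans <| ?_⟩
    refine Equiv.trans (Equiv.sigmaCongrRight fun m => consEquiv _ _ _) ?_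
    refine Equiv.trans (sigmaComm') ?_
    refine Equiv.trans (Equiv.sigmaCongrRight fun n => ?_) (consEquiv x (y :: L) γ).symm
    refine Equiv.trans (Equiv.sigmaCongrRight fun m => Equiv.cast ?_) (consEquiv _ _ _).symm
    rw [sub_right_comm]
  | trans p q ihp ihq =>
    exact fun γ => ⟨(ihp γ).some.trans (ihq γ).some⟩

lemma partFn_perm {Y Y' : List (ZLat ι)} (p : List.Perm Y Y') : partFn Y = partFn Y' := by
  funext γ
  rw [partFn_eq_card, partFn_eq_card, Nat.card_congr (sols_perm_equiv p γ).some]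

lemma partFn_nil : partFn ([] : List (ZLat ι)) = delta0 := by
  funext γ
  by_cases h : γ = 0
  · subst h
    rw [partFn_eq_card]
    have : ∀ k : Fin ([] : List (ZLat ι)).length → ℕ, ∑ i, (k i : ℤ) • ([] : List (ZLat ι)).get i = 0 := by
      intro k; simp
    have e : sols ([] : List (ZLat ι)) 0 ≃ Unit := by
      refine ⟨fun _ => Unit.unit, fun _ => ⟨fun i => 0, this _⟩, fun k => ?_, fun _ => rfl⟩
      apply Subtype.ext
      funext i
      exact absurd i.2 (by simp)
    rw [Nat.card_congr e]
    simp [delta0]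
  · rw [partFn_eq_card]
    have : IsEmpty (sols ([] : List (ZLat ι)) γ) := by
      constructor
      rintro ⟨k, hk⟩
      simp at hk
      exact h hk.symm
    rw [Nat.card_of_isEmpty]
    simp [delta0, h]

-- finiteness
lemma sols_finite {u : Amb ι} {Y : List (ZLat ι)}
    (hpos : ∀ a ∈ Y, 0 < dotR u (castV a)) (γ : ZLat ι) : Finite (sols Y γ) := by
  set n := Y.length
  set d : Fin n → ℝ := fun i => dotR u (castV (Y.get i)) with hd
  have hdpos : ∀ i, 0 < d i := fun i => hpos _ (Y.get_mem i)
  set c := dotR u (castV γ) with hc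
  have key : ∀ (k : sols Y γ) (i : Fin n), (k.1 i : ℝ) * d i ≤ c := by
    rintro ⟨k, hk⟩ i
    have hsum : ∑ j, (k j : ℝ) * d j = c := by
      rw [hc, ← hk, castV_sum_smul, dotR_sum]
      exact Finset.sum_congr rfl fun j _ => by rw [dotR_smul]
    rw [← hsum]
    apply Finset.single_le_sum (f := fun j => (k j : ℝ) * d j) (fun j _ => ?_) (Finset.mem_univ i)
    exact mul_nonneg (by positivity) (hdpos j).le
  set N : Fin n → ℕ := fun i => ⌈c / d i⌉₊ with hN
  have bound : ∀ (k : sols Y γ) (i : Fin n), k.1 i ≤ N i := by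
    intro k i
    have h1 : (k.1 i : ℝ) ≤ c / d i := by
      rw [le_div_iff₀ (hdpos i)]
      exact key k i
    have h2 : (k.1 i : ℝ) ≤ (N i : ℝ) := h1.trans (Nat.le_ceil _)
    exact_mod_cast h2
  have : Function.Injective (fun k : sols Y γ => fun i => (⟨k.1 i, Nat.lt_succ_of_le (bound k i)⟩ : Fin (N i + 1))) := by
    intro k k' h
    apply Subtype.ext
    funext i
    have := congrFun h i
    simpa [Fin.mk.injEq] using this
  exact Finite.of_injective _ this

lemma partFn_ne_zero_mem_cone {Y : List (ZLat ι)} {γ : ZLat ι} (h : partFn Y γ ≠ 0) :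
    castV γ ∈ coneC Y := by
  rw [partFn_eq_card] at h
  have : Nonempty (sols Y γ) := by
    by_contra hne
    rw [not_nonempty_iff] at hne
    rw [Nat.card_of_isEmpty] at h
    simp at h
  obtain ⟨k, hk⟩ := this
  exact ⟨fun i => (k i : ℝ), fun i => by positivity, by rw [← hk, castV_sum_smul]⟩

-- head peel
def natSigmaSplit {T : ℕ → Type*} : (Σ m : ℕ, T m) ≃ (T 0 ⊕ Σ m : ℕ, T (m + 1)) where
  toFun p := match p with
    | ⟨0, t⟩ => Sum.inl t
    | ⟨m+1, t⟩ => Sum.inr ⟨m, t⟩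
  invFun p := match p with
    | Sum.inl t => ⟨0, t⟩
    | Sum.inr ⟨m, t⟩ => ⟨m+1, t⟩
  left_inv p := by rcases p with ⟨(_|m), t⟩ <;> rfl
  right_inv p := by rcases p with t | ⟨m, t⟩ <;> rfl

lemma headPeel {u : Amb ι} {x : ZLat ι} {Y : List (ZLat ι)}
    (hpos : ∀ a ∈ x :: Y, 0 < dotR u (castV a)) :
    nab x (partFn (x :: Y)) = partFn Y := by
  have hposY : ∀ a ∈ Y, 0 < dotR u (castV a) := fun a ha => hpos a (List.mem_cons_of_mem _ ha)
  funext γ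
  have e : sols (x :: Y) γ ≃ (sols Y γ ⊕ sols (x :: Y) (γ - x)) := by
    refine (consEquiv x Y γ).trans <| natSigmaSplit.trans ?_
    refine Equiv.sumCongr (Equiv.cast ?_) ?_
    · congr 1; simp
    · refine Equiv.trans (Equiv.sigmaCongrRight fun m => Equiv.cast ?_) (consEquiv x Y (γ - x)).symm
      congr 1
      push_cast
      rw [add_smul, one_smul]
      abel
  have f1 : Finite (sols Y γ) := sols_finite hposY γ
  have f2 : Finite (sols (x :: Y) (γ - x)) := sols_finite hpos _
  have hcard : Nat.card (sols (x :: Y) γ)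
      = Nat.card (sols Y γ) + Nat.card (sols (x :: Y) (γ - x)) := by
    rw [Nat.card_congr e, Nat.card_sum]
  show partFn (x :: Y) γ - partFn (x :: Y) (γ - x) = partFn Y γ
  rw [partFn_eq_card, partFn_eq_card, partFn_eq_card, hcard]
  push_cast
  ring

end C2
section C3
variable {ι : Type*} [Fintype ι]

lemma sgn_pos (u : Amb ι) {a : ZLat ι} (h : dotR u (castV a) ≠ 0) :
    0 < dotR u (castV (if 0 < dotR u (castV a) then a else -a)) := by
  by_cases hp : 0 < dotR u (castV a)
  · rwa [if_pos hp]
  · rw [if_neg hp, castV_neg, dotR_neg]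
    rcases lt_trichotomy (dotR u (castV a)) 0 with h1 | h1 | h1
    · linarith
    · exact absurd h1 h
    · exact absurd h1 hp

lemma Cstar (u : Amb ι) (L W : List (ZLat ι))
    (hL : ∀ a ∈ L, dotR u (castV a) ≠ 0) (hW : ∀ w ∈ W, 0 < dotR u (castV w)) :
    nabL L (fun γ => partFn (L.map (fun a => if 0 < dotR u (castV a) then a else -a) ++ W)
        (γ + (L.filter (fun a => decide (dotR u (castV a) < 0))).sum))
      = fun γ => (-1) ^ (L.filter (fun a => decide (dotR u (castV a) < 0))).length
          * partFn W γ := by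
  induction L generalizing W with
  | nil => simp [nabL]
  | cons a L ih =>
    have ha := hL a (List.mem_cons_self)
    have hL' : ∀ b ∈ L, dotR u (castV b) ≠ 0 := fun b hb => hL b (List.mem_cons_of_mem _ hb)
    by_cases hp : 0 < dotR u (castV a)
    · have hfilt : (a :: L).filter (fun a => decide (dotR u (castV a) < 0))
          = L.filter (fun a => decide (dotR u (castV a) < 0)) := by
        rw [List.filter_cons_of_neg]
        simp only [decide_eq_true_eq, not_lt]
        exact le_of_lt hp
      have hmap : (a :: L).map (fun a => if 0 < dotR u (castV a) then a else -a)
          = a :: L.map (fun a => if 0 < dotR u (castV a) then a else -a) := by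
        rw [List.map_cons, if_pos hp]
      rw [hfilt, hmap]
      have hperm : partFn (a :: (L.map (fun a => if 0 < dotR u (castV a) then a else -a) ++ W))
          = partFn (L.map (fun a => if 0 < dotR u (castV a) then a else -a) ++ (a :: W)) := by
        apply partFn_perm
        exact List.perm_middle.symm
      rw [List.cons_append, hperm]
      rw [nabL_cons, ih (a :: W) hL' (by
        intro w hw
        rcases List.mem_cons.mp hw with h | h
        · subst h; exact hp
        · exact hW w h)]
      rw [nab_mul_left]
      rw [headPeel (u := u) (by
        intro w hw
        rcases List.mem_cons.mp hw with h | h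
        · subst h; exact hp
        · exact hW w h)]
    · have hd : dotR u (castV a) < 0 := by
        rcases lt_trichotomy (dotR u (castV a)) 0 with h1 | h1 | h1
        · exact h1
        · exact absurd h1 ha
        · exact absurd h1 hp
      have hfilt : (a :: L).filter (fun a => decide (dotR u (castV a) < 0))
          = a :: L.filter (fun a => decide (dotR u (castV a) < 0)) := by
        rw [List.filter_cons_of_pos]
        simpa using hd
      have hmap : (a :: L).map (fun a => if 0 < dotR u (castV a) then a else -a)
          = (-a) :: L.map (fun a => if 0 < dotR u (castV a) then a else -a) := by
        rw [List.map_cons, if_neg hp]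
      rw [hfilt, hmap]
      have hnegpos : 0 < dotR u (castV (-a)) := by
        rw [castV_neg, dotR_neg]; linarith
      have hperm : partFn ((-a) :: (L.map (fun a => if 0 < dotR u (castV a) then a else -a) ++ W))
          = partFn (L.map (fun a => if 0 < dotR u (castV a) then a else -a) ++ ((-a) :: W)) := by
        apply partFn_perm
        exact List.perm_middle.symm
      rw [List.cons_append, hperm]
      have hWa : ∀ w ∈ (-a) :: W, 0 < dotR u (castV w) := by
        intro w hw
        rcases List.mem_cons.mp hw with h | h
        · subst h; exact hnegpos
        · exact hW w h
      rw [nabL_cons]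
      have e2 : nabL L (fun γ => partFn (L.map (fun a => if 0 < dotR u (castV a) then a else -a)
              ++ ((-a) :: W)) (γ + (a :: L.filter (fun a => decide (dotR u (castV a) < 0))).sum))
          = fun γ => nabL L (fun δ => partFn (L.map (fun a => if 0 < dotR u (castV a) then a else -a)
              ++ ((-a) :: W)) (δ + (L.filter (fun a => decide (dotR u (castV a) < 0))).sum)) (γ + a) := by
        rw [← nabL_shift L a (fun δ => partFn (L.map (fun a => if 0 < dotR u (castV a) then a else -a)
              ++ ((-a) :: W)) (δ + (L.filter (fun a => decide (dotR u (castV a) < 0))).sum))]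
        refine congrArg (nabL L) ?_
        funext γ
        simp only [List.sum_cons]
        show partFn _ (γ + (a + (L.filter (fun a => decide (dotR u (castV a) < 0))).sum))
          = partFn _ ((γ + a) + (L.filter (fun a => decide (dotR u (castV a) < 0))).sum)
        congr 1
        abel
      rw [e2, ih ((-a) :: W) hL' hWa]
      have hpeel := headPeel (u := u) hWa
      funext γ
      simp only [nab]
      have h1 : ∀ δ, partFn ((-a) :: W) δ - partFn ((-a) :: W) (δ + a) = partFn W δ := by
        intro δ
        have := congrFun hpeel δ
        simpa [nab, sub_neg_eq_add] using this
      have h2 : γ - a + a = γ := by abel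
      rw [h2]
      have := h1 γ
      rw [List.length_cons, pow_succ]
      set q := (-1 : ℤ) ^ (L.filter (fun a => decide (dotR u (castV a) < 0))).length
      have h3 : partFn ((-a) :: W) (γ + a) = partFn ((-a) :: W) γ - partFn W γ := by omega
      rw [h3]
      ring

lemma nabOut_PF (X : List (ZLat ι)) (r : Submodule ℝ (Amb ι)) (u : Amb ι)
    (hreg : Reg X r u) : nabOut X r (PF X r u) = delta0 := by
  set L := outSub X r with hLdef
  have hL : ∀ a ∈ L, dotR u (castV a) ≠ 0 := by
    intro a ha
    rw [hLdef, outSub, List.mem_filter] at ha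
    exact hreg.2 a ha.1 (by simpa using ha.2)
  have hC := Cstar u L [] hL (by simp)
  rw [List.append_nil] at hC
  have hPF : PF X r u = fun γ => (-1) ^ (negPart X r u).length *
      (fun δ => partFn (signedOut X r u) (δ + (negPart X r u).sum)) γ := rfl
  rw [nabOut, hPF, nabL_mul_left]
  have hsig : signedOut X r u = L.map (fun a => if 0 < dotR u (castV a) then a else -a) := rfl
  have hneg : negPart X r u = L.filter (fun a => decide (dotR u (castV a) < 0)) := rfl
  rw [hsig, hneg, hC]
  funext γ
  rw [partFn_nil]
  rw [← mul_assoc, ← pow_add]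
  rw [Even.neg_one_pow ⟨_, rfl⟩, one_mul]

end C3
section C4
variable {ι : Type*} [Fintype ι]

lemma conv_ne_zero {h g : ZLat ι → ℤ} {γ : ZLat ι} (hne : conv h g γ ≠ 0) :
    ∃ μ, h (γ - μ) ≠ 0 ∧ g μ ≠ 0 := by
  by_contra hc
  push_neg at hc
  apply hne
  rw [conv]
  apply finsum_eq_zero_of_forall_eq_zero
  intro μ
  by_cases h1 : h (γ - μ) = 0
  · rw [h1, zero_mul]
  · rw [hc μ h1, mul_zero]

lemma latt_cone_finite (u : Amb ι) (S : List (ZLat ι))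
    (hS : ∀ w ∈ S, 0 < dotR u (castV w)) (c : ℝ) :
    {ν : ZLat ι | castV ν ∈ coneC S ∧ dotR u (castV ν) = c}.Finite := by
  set n := S.length
  set d : Fin n → ℝ := fun i => dotR u (castV (S.get i)) with hd
  have hdpos : ∀ i, 0 < d i := fun i => hS _ (S.get_mem i)
  set M : ι → ℝ := fun j => ∑ i, (c / d i) * |castV (S.get i) j| with hM
  apply Set.Finite.subset
    (Set.Finite.pi (fun j : ι => Set.finite_Icc (-⌈M j⌉) ⌈M j⌉))
  rintro ν ⟨⟨t, ht0, htv⟩, hdot⟩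
  have hsum : ∑ i, t i * d i = c := by
    rw [← hdot, htv, dotR_sum]
    exact Finset.sum_congr rfl fun i _ => by rw [dotR_smul]
  have htle : ∀ i, t i ≤ c / d i := by
    intro i
    rw [le_div_iff₀ (hdpos i)]
    rw [← hsum]
    apply Finset.single_le_sum (f := fun i => t i * d i) (fun j _ => mul_nonneg (ht0 j) (hdpos j).le)
      (Finset.mem_univ i)
  have hcoord : ∀ j, |(ν j : ℝ)| ≤ M j := by
    intro j
    have hνj : (ν j : ℝ) = ∑ i, t i * castV (S.get i) j := by
      have := congrFun htv j
      simpa [castV, Finset.sum_apply] using this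
    rw [hνj, hM]
    refine (Finset.abs_sum_le_sum_abs _ _).trans ?_
    apply Finset.sum_le_sum
    intro i _
    rw [abs_mul, abs_of_nonneg (ht0 i)]
    exact mul_le_mul_of_nonneg_right (htle i) (abs_nonneg _)
  intro j _
  simp only [Set.mem_Icc]
  have h1 := hcoord j
  rw [abs_le] at h1
  constructor
  · have : (-⌈M j⌉ : ℝ) ≤ (ν j : ℝ) := by
      push_cast
      have := Int.le_ceil (M j)
      linarith [h1.1]
    exact_mod_cast this
  · have : ((ν j : ℤ) : ℝ) ≤ (⌈M j⌉ : ℝ) := le_trans h1.2 ((Int.le_ceil (M j)).trans (by push_cast; linarith [Int.le_ceil (M j)]))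
    exact_mod_cast this

lemma conv_summand_finite {r : Submodule ℝ (Amb ι)} {u : Amb ι}
    (hu : ∀ v ∈ r, dotR u v = 0) (S : List (ZLat ι))
    (hS : ∀ w ∈ S, 0 < dotR u (castV w)) (T : Finset (ZLat ι))
    {h g' : ZLat ι → ℤ}
    (hh : ∀ ν, h ν ≠ 0 → ∃ t ∈ T, castV (ν + t) ∈ coneC S)
    (hg : ∀ μ, g' μ ≠ 0 → castV μ ∈ r) (γ : ZLat ι) :
    (Function.support fun μ => h (γ - μ) * g' μ).Finite := by
  have key : ∀ t : ZLat ι,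
      {μ : ZLat ι | castV (γ - μ + t) ∈ coneC S ∧ castV μ ∈ r}.Finite := by
    intro t
    have hfin := latt_cone_finite u S hS (dotR u (castV (γ + t)))
    have : {μ : ZLat ι | castV (γ - μ + t) ∈ coneC S ∧ castV μ ∈ r}
        ⊆ (fun μ => γ + t - μ) ⁻¹' {ν : ZLat ι | castV ν ∈ coneC S ∧ dotR u (castV ν) = dotR u (castV (γ + t))} := by
      rintro μ ⟨h1, h2⟩
      constructor
      · show castV (γ + t - μ) ∈ coneC S
        have : γ + t - μ = γ - μ + t := by abel
        rw [this]; exact h1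
      · show dotR u (castV (γ + t - μ)) = _
        rw [castV_sub, dotR_sub, hu _ h2, sub_zero]
    apply Set.Finite.subset (Set.Finite.preimage ?_ hfin) this
    intro x _ y _ hxy
    have h' : γ + t - x = γ + t - y := hxy
    exact sub_right_injective h'
  have hsub : (Function.support fun μ => h (γ - μ) * g' μ)
      ⊆ ⋃ t ∈ T, {μ : ZLat ι | castV (γ - μ + t) ∈ coneC S ∧ castV μ ∈ r} := by
    intro μ hμ
    have h1 : h (γ - μ) ≠ 0 := fun h0 => hμ (by simp [h0])
    have h2 : g' μ ≠ 0 := fun h0 => hμ (by simp [h0])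
    obtain ⟨t, ht, hmem⟩ := hh _ h1
    exact Set.mem_biUnion ht ⟨hmem, hg _ h2⟩
  exact Set.Finite.subset (Set.Finite.biUnion T.finite_toSet fun t _ => key t) hsub

lemma nab_conv_left {h g : ZLat ι → ℤ}
    (hfin : ∀ γ, (Function.support fun μ => h (γ - μ) * g μ).Finite) (a : ZLat ι) :
    nab a (conv h g) = conv (nab a h) g := by
  funext γ
  show conv h g γ - conv h g (γ - a) = _
  rw [conv, conv, conv, ← finsum_sub_distrib (hfin γ) (hfin (γ - a))]
  apply finsum_congr
  intro μ
  have : γ - a - μ = γ - μ - a := by abel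
  rw [this, nab, ← sub_mul]

lemma nab_conv_right {h g : ZLat ι → ℤ} {a : ZLat ι}
    (hfin : ∀ γ, (Function.support fun μ => h (γ - μ) * g μ).Finite)
    (hfin2 : ∀ γ, (Function.support fun μ => h (γ - μ) * g (μ - a)).Finite) :
    nab a (conv h g) = conv h (nab a g) := by
  funext γ
  show conv h g γ - conv h g (γ - a) = _
  have hre : conv h g (γ - a) = ∑ᶠ μ, h (γ - μ) * g (μ - a) := by
    rw [conv]
    rw [← finsum_comp_equiv (Equiv.addRight a) (f := fun μ => h (γ - μ) * g (μ - a))]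
    apply finsum_congr
    intro μ
    have h1 : γ - (Equiv.addRight a μ) = γ - a - μ := by
      show γ - (μ + a) = γ - a - μ
      abel
    have h2 : (Equiv.addRight a μ) - a = μ := by
      show μ + a - a = μ
      abel
    rw [h1, h2]
  rw [hre, conv, conv, ← finsum_sub_distrib (hfin γ) (hfin2 γ)]
  apply finsum_congr
  intro μ
  rw [nab, ← mul_sub]

lemma conv_delta0 (g : ZLat ι → ℤ) : conv delta0 g = g := by
  funext γ
  rw [conv]
  rw [finsum_eq_single _ γ ?_]
  · simp [delta0]
  · intro μ hμ
    have : γ - μ ≠ 0 := fun h0 => hμ (sub_eq_zero.mp h0).symm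
    simp [delta0, this]

end C4
section C5
variable {ι : Type*} [Fintype ι]

lemma dotR_add_left (u u' v : Amb ι) : dotR (u + u') v = dotR u v + dotR u' v := by
  simp [dotR, add_mul, Finset.sum_add_distrib]
lemma dotR_smul_left (c : ℝ) (u v : Amb ι) : dotR (c • u) v = c * dotR u v := by
  simp only [dotR, Pi.smul_apply, smul_eq_mul, Finset.mul_sum]
  exact Finset.sum_congr rfl fun i _ => by ring
lemma dotR_zero_left (v : Amb ι) : dotR (0 : Amb ι) v = 0 := by simp [dotR]

lemma exists_dual (r : Submodule ℝ (Amb ι)) (x : Amb ι) (hx : x ∉ r) :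
    ∃ u : Amb ι, (∀ v ∈ r, dotR u v = 0) ∧ dotR u x ≠ 0 := by
  have hxQ : Submodule.Quotient.mk (p := r) x ≠ 0 := by
    rw [Ne, Submodule.Quotient.mk_eq_zero]
    exact hx
  have : ¬(∀ φ : Module.Dual ℝ (Amb ι ⧸ r), φ (Submodule.Quotient.mk x) = 0) := by
    rw [Module.forall_dual_apply_eq_zero_iff]
    exact hxQ
  push_neg at this
  obtain ⟨ψ, hψ⟩ := this
  set φ : Amb ι →ₗ[ℝ] ℝ := ψ.comp r.mkQ with hφ
  have hφr : ∀ v ∈ r, φ v = 0 := by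
    intro v hv
    simp only [hφ, LinearMap.comp_apply]
    rw [show r.mkQ v = 0 from (Submodule.Quotient.mk_eq_zero r).mpr hv]
    simp
  have hφx : φ x ≠ 0 := hψ
  set u : Amb ι := fun i => φ (Pi.single i 1) with hu
  have hdot : ∀ v : Amb ι, dotR u v = φ v := by
    intro v
    have hv : v = ∑ i, v i • (Pi.single i 1 : Amb ι) := by
      funext j
      simp only [Finset.sum_apply, Pi.smul_apply, smul_eq_mul]
      rw [Finset.sum_eq_single j]
      · simp
      · intro i _ hij
        rw [Pi.single_eq_of_ne (Ne.symm hij)]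
        ring
      · intro hj
        exact absurd (Finset.mem_univ j) hj
    conv_rhs => rw [hv]
    rw [map_sum]
    simp only [map_smul, smul_eq_mul]
    rw [dotR]
    exact Finset.sum_congr rfl fun i _ => by rw [hu]; ring
  exact ⟨u, fun v hv => by rw [hdot]; exact hφr v hv, by rw [hdot]; exact hφx⟩

lemma exists_reg_aux (r : Submodule ℝ (Amb ι)) (L : List (ZLat ι))
    (hL : ∀ a ∈ L, castV a ∉ r) :
    ∃ u, (∀ v ∈ r, dotR u v = 0) ∧ ∀ a ∈ L, dotR u (castV a) ≠ 0 := by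
  induction L with
  | nil => exact ⟨0, fun v _ => dotR_zero_left v, by simp⟩
  | cons a L ih =>
    obtain ⟨u, hu1, hu2⟩ := ih (fun b hb => hL b (List.mem_cons_of_mem _ hb))
    obtain ⟨w, hw1, hw2⟩ := exists_dual r (castV a) (hL a (List.mem_cons_self))
    have hbad : ∀ b ∈ a :: L, {c : ℝ | dotR u (castV b) + c * dotR w (castV b) = 0}.Finite := by
      intro b hb
      by_cases hB : dotR w (castV b) = 0
      · have hA : dotR u (castV b) ≠ 0 := by
          rcases List.mem_cons.mp hb with h | h
          · subst h; exact absurd hB hw2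
          · exact hu2 b h
        have : {c : ℝ | dotR u (castV b) + c * dotR w (castV b) = 0} = ∅ := by
          ext c
          simp only [Set.mem_setOf_eq, Set.mem_empty_iff_false, iff_false]
          rw [hB, mul_zero, add_zero]
          exact hA
        rw [this]; exact Set.finite_empty
      · apply Set.Subsingleton.finite
        intro c1 h1 c2 h2
        simp only [Set.mem_setOf_eq] at h1 h2
        have : (c1 - c2) * dotR w (castV b) = 0 := by linarith
        rcases mul_eq_zero.mp this with h | h
        · linarith
        · exact absurd h hB
    have hfin : (⋃ b ∈ (a :: L), {c : ℝ | dotR u (castV b) + c * dotR w (castV b) = 0}).Finite :=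
      Set.Finite.biUnion (a :: L).finite_toSet hbad
    obtain ⟨c, hc⟩ := hfin.exists_notMem
    refine ⟨u + c • w, ?_, ?_⟩
    · intro v hv
      rw [dotR_add_left, dotR_smul_left, hu1 v hv, hw1 v hv]
      ring
    · intro b hb
      intro h0
      apply hc
      refine Set.mem_iUnion₂.mpr ⟨b, hb, ?_⟩
      rw [Set.mem_setOf_eq, ← dotR_smul_left, ← dotR_add_left]
      exact h0

lemma exists_reg (X : List (ZLat ι)) (r : Submodule ℝ (Amb ι)) :
    ∃ u, Reg X r u := by
  obtain ⟨u, h1, h2⟩ := exists_reg_aux r (X.filter (fun a => decide (castV a ∉ r)))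
    (by
      intro a ha
      rw [List.mem_filter] at ha
      simpa using ha.2)
  refine ⟨u, h1, ?_⟩
  intro a ha hnr
  exact h2 a (List.mem_filter.mpr ⟨ha, by simpa using hnr⟩)

end C5
section C6
variable {ι : Type*} [Fintype ι]

lemma decide_split (p q t : Prop) (h : p ↔ q ∨ t) : (decide p) = (decide q || decide t) := by
  by_cases hq : q <;> by_cases ht : t <;> simp [hq, ht, h]

lemma mem_inSub {X : List (ZLat ι)} {r : Submodule ℝ (Amb ι)} {a : ZLat ι} :
    a ∈ inSub X r ↔ a ∈ X ∧ castV a ∈ r := by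
  rw [inSub, List.mem_filter]
  simp

lemma mem_outSub {X : List (ZLat ι)} {r : Submodule ℝ (Amb ι)} {a : ZLat ι} :
    a ∈ outSub X r ↔ a ∈ X ∧ castV a ∉ r := by
  rw [outSub, List.mem_filter]
  simp

lemma nabOut_nabOut (X : List (ZLat ι)) (r s : Submodule ℝ (Amb ι)) (f : ZLat ι → ℤ)
    (hsr : s ≤ r) :
    nabOut (inSub X r) s (nabOut X r f) = nabOut X s f := by
  rw [nabOut, nabOut, nabOut, ← nabL_append]
  apply nabL_perm
  have h1 : outSub (inSub X r) s
      = X.filter (fun a => decide (castV a ∉ s) && decide (castV a ∈ r)) := by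
    rw [outSub, inSub, List.filter_filter]
  rw [h1]
  refine (filter_perm_split X (fun a => decide (castV a ∉ s))
    (fun a => decide (castV a ∉ s) && decide (castV a ∈ r))
    (fun a => decide (castV a ∉ r)) ?_ ?_).symm
  · intro a _
    show decide (castV a ∉ s) = (decide (castV a ∉ s) && decide (castV a ∈ r) || decide (castV a ∉ r))
    have hsrs := fun hs : castV a ∈ s => hsr hs
    by_cases h1 : castV a ∈ s <;> by_cases h2 : castV a ∈ r <;> simp [h1, h2] <;> tauto
  · intro a _
    show ¬((decide (castV a ∉ s) && decide (castV a ∈ r)) = true ∧ decide (castV a ∉ r) = true)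
    rintro ⟨h1, h2⟩
    simp only [Bool.and_eq_true, decide_eq_true_eq] at h1 h2
    exact h2 h1.2

theorem part1 (X : List (ZLat ι)) (r : Submodule ℝ (Amb ι)) (hr : IsRational X r)
    (f : ZLat ι → ℤ) (hf : memF X f) : memFrel X r (nabOut X r f) := by
  constructor
  · exact hf r hr
  · intro s hs
    obtain ⟨Y, hY, hsY⟩ := hs
    have hsr : s ≤ r := by
      rw [hsY]
      rw [spanOf, Submodule.span_le]
      rintro _ ⟨a, ha, rfl⟩
      exact (mem_inSub.mp (hY a ha)).2
    have hXs : IsRational X s := ⟨Y, fun a ha => (mem_inSub.mp (hY a ha)).1, hsY⟩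
    rw [nabOut_nabOut X r s f hsr]
    exact hf s hXs

end C6
section C7
variable {ι : Type*} [Fintype ι]

def HGp (S : List (ZLat ι)) (h : ZLat ι → ℤ) : Prop :=
  ∃ T : Finset (ZLat ι), ∀ ν, h ν ≠ 0 → ∃ t ∈ T, castV (ν + t) ∈ coneC S

def GGp (r : Submodule ℝ (Amb ι)) (g' : ZLat ι → ℤ) : Prop :=
  ∀ μ, g' μ ≠ 0 → castV μ ∈ r

lemma nab_ne_zero {a : ZLat ι} {h : ZLat ι → ℤ} {ν : ZLat ι} (hν : nab a h ν ≠ 0) :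
    h ν ≠ 0 ∨ h (ν - a) ≠ 0 := by
  by_contra hc
  push_neg at hc
  exact hν (by rw [nab, hc.1, hc.2, sub_zero])

lemma HGp_nab {S : List (ZLat ι)} {h : ZLat ι → ℤ} (a : ZLat ι) (hh : HGp S h) :
    HGp S (nab a h) := by
  obtain ⟨T, hT⟩ := hh
  refine ⟨T ∪ T.image (fun t => t - a), ?_⟩
  intro ν hν
  rcases nab_ne_zero hν with h1 | h1
  · obtain ⟨t, ht, hmem⟩ := hT ν h1
    exact ⟨t, Finset.mem_union_left _ ht, hmem⟩
  · obtain ⟨t, ht, hmem⟩ := hT (ν - a) h1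
    refine ⟨t - a, Finset.mem_union_right _ (Finset.mem_image.mpr ⟨t, ht, rfl⟩), ?_⟩
    have : ν + (t - a) = ν - a + t := by abel
    rw [this]
    exact hmem

lemma HGp_nabL {S : List (ZLat ι)} {h : ZLat ι → ℤ} (L : List (ZLat ι)) (hh : HGp S h) :
    HGp S (nabL L h) := by
  induction L with
  | nil => exact hh
  | cons a L ih => exact HGp_nab a ih

lemma GGp_nab {r : Submodule ℝ (Amb ι)} {g' : ZLat ι → ℤ} {a : ZLat ι}
    (ha : castV a ∈ r) (hg : GGp r g') : GGp r (nab a g') := by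
  intro μ hμ
  rcases nab_ne_zero hμ with h1 | h1
  · exact hg μ h1
  · have h2 := hg _ h1
    have : castV μ = castV (μ - a) + castV a := by rw [castV_sub]; abel
    rw [this]
    exact Submodule.add_mem r h2 ha

lemma GGp_nabL {r : Submodule ℝ (Amb ι)} {g' : ZLat ι → ℤ} {M : List (ZLat ι)}
    (hM : ∀ a ∈ M, castV a ∈ r) (hg : GGp r g') : GGp r (nabL M g') := by
  induction M with
  | nil => exact hg
  | cons a M ih =>
    exact GGp_nab (hM a (List.mem_cons_self))
      (ih (fun b hb => hM b (List.mem_cons_of_mem _ hb)))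

variable {r : Submodule ℝ (Amb ι)} {u : Amb ι} {S : List (ZLat ι)}

lemma nabL_conv_left_S (hu : ∀ v ∈ r, dotR u v = 0) (hS : ∀ w ∈ S, 0 < dotR u (castV w))
    {h g' : ZLat ι → ℤ} (L : List (ZLat ι)) (hh : HGp S h) (hg : GGp r g') :
    nabL L (conv h g') = conv (nabL L h) g' := by
  induction L with
  | nil => rfl
  | cons a L ih =>
    rw [nabL_cons, ih, nabL_cons]
    obtain ⟨T, hT⟩ := HGp_nabL L hh
    exact nab_conv_left (fun γ => conv_summand_finite hu S hS T hT hg γ) a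

lemma nabL_conv_right_S (hu : ∀ v ∈ r, dotR u v = 0) (hS : ∀ w ∈ S, 0 < dotR u (castV w))
    {h g' : ZLat ι → ℤ} (M : List (ZLat ι)) (hM : ∀ a ∈ M, castV a ∈ r)
    (hh : HGp S h) (hg : GGp r g') :
    nabL M (conv h g') = conv h (nabL M g') := by
  induction M with
  | nil => rfl
  | cons a M ih =>
    have hM' : ∀ b ∈ M, castV b ∈ r := fun b hb => hM b (List.mem_cons_of_mem _ hb)
    have ha : castV a ∈ r := hM a (List.mem_cons_self)
    rw [nabL_cons, ih hM', nabL_cons]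
    obtain ⟨T, hT⟩ := hh
    have hgM : GGp r (nabL M g') := GGp_nabL hM' hg
    have hgM2 : GGp r (fun μ => nabL M g' (μ - a)) := by
      intro μ hμ
      have h2 := hgM _ hμ
      have : castV μ = castV (μ - a) + castV a := by rw [castV_sub]; abel
      rw [this]
      exact Submodule.add_mem r h2 ha
    exact nab_conv_right (fun γ => conv_summand_finite hu S hS T hT hgM γ)
      (fun γ => conv_summand_finite hu S hS T hT hgM2 γ)

lemma cone_subset_of_mem {W : List (ZLat ι)} {s : Submodule ℝ (Amb ι)}
    (hW : ∀ w ∈ W, castV w ∈ s) : coneC W ⊆ (s : Set (Amb ι)) := by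
  rintro v ⟨t, ht0, rfl⟩
  apply Submodule.sum_mem
  intro i _
  exact Submodule.smul_mem s _ (hW _ (W.get_mem i))

lemma list_sum_castV_mem {B : List (ZLat ι)} {s : Submodule ℝ (Amb ι)}
    (hB : ∀ b ∈ B, castV b ∈ s) : castV B.sum ∈ s := by
  induction B with
  | nil =>
    show castV (0 : ZLat ι) ∈ s
    rw [castV_zero]; exact Submodule.zero_mem s
  | cons b B ih =>
    rw [List.sum_cons, castV_add]
    exact Submodule.add_mem s (hB b (List.mem_cons_self))
      (ih fun c hc => hB c (List.mem_cons_of_mem _ hc))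

end C7
section C8
variable {ι : Type*} [Fintype ι]

lemma suppPart2 (X : List (ZLat ι)) (r : Submodule ℝ (Amb ι)) (u : Amb ι)
    (hreg : Reg X r u) (s : Submodule ℝ (Amb ι)) :
    Function.support (nabL ((outSub X r).filter (fun a => decide (castV a ∉ s))) (PF X r u))
      ⊆ {γ | castV γ ∈ s} := by
  set L := outSub X r with hL
  have hLdots : ∀ a ∈ L, dotR u (castV a) ≠ 0 := by
    intro a ha
    rw [hL, mem_outSub] at ha
    exact hreg.2 a ha.1 ha.2
  set K := L.filter (fun a => decide (castV a ∉ s)) with hK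
  set L2 := L.filter (fun a => decide (castV a ∈ s)) with hL2
  have hsplit : List.Perm L (K ++ L2) := by
    have h0 : L.filter (fun _ => true) = L := List.filter_true L
    rw [← h0]
    apply filter_perm_split
    · intro a _
      by_cases h1 : castV a ∈ s <;> simp [h1]
    · intro a _
      rintro ⟨h1, h2⟩
      simp only [decide_eq_true_eq] at h1 h2
      exact h1 h2
  have hKdots : ∀ a ∈ K, dotR u (castV a) ≠ 0 := fun a ha =>
    hLdots a (List.mem_of_mem_filter ha)
  set sgn : ZLat ι → ZLat ι := fun a => if 0 < dotR u (castV a) then a else -a with hsgn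
  have hW : ∀ w ∈ L2.map sgn, 0 < dotR u (castV w) := by
    intro w hw
    rw [List.mem_map] at hw
    obtain ⟨a, ha, rfl⟩ := hw
    exact sgn_pos u (hLdots a (List.mem_of_mem_filter ha))
  set dlt : ZLat ι → Bool := fun a => decide (dotR u (castV a) < 0) with hdlt
  set B := L.filter dlt with hB
  set BK := K.filter dlt with hBK
  set B2 := L2.filter dlt with hB2
  have hBperm : List.Perm B (BK ++ B2) := by
    have eK : BK = L.filter (fun a => dlt a && decide (castV a ∉ s)) := by
      rw [hBK, hK, List.filter_filter]
    have eL2 : B2 = L.filter (fun a => dlt a && decide (castV a ∈ s)) := by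
      rw [hB2, hL2, List.filter_filter]
    rw [hB, eK, eL2]
    apply filter_perm_split
    · intro a _
      by_cases h1 : castV a ∈ s <;> by_cases h2 : dotR u (castV a) < 0 <;>
        simp [hdlt, h1, h2]
    · intro a _
      rintro ⟨h1, h2⟩
      simp only [Bool.and_eq_true, decide_eq_true_eq] at h1 h2
      exact h1.2 h2.2
  have hsum : B.sum = BK.sum + B2.sum := by
    rw [hBperm.sum_eq, List.sum_append]
  have hlen : B.length = BK.length + B2.length := by
    rw [hBperm.length_eq, List.length_append]
  have hmapperm : List.Perm (L.map sgn) (K.map sgn ++ L2.map sgn) := by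
    rw [← List.map_append]
    exact hsplit.map sgn
  set M := K.map sgn ++ L2.map sgn with hM
  set c0 : ℤ := (-1) ^ B.length with hc0
  set H : ZLat ι → ℤ := fun δ => partFn M (δ + BK.sum) with hH
  have hPF' : PF X r u = fun γ => c0 * H (γ + B2.sum) := by
    funext γ
    rw [PF]
    have e1 : negPart X r u = B := rfl
    have e2 : signedOut X r u = L.map sgn := rfl
    rw [e1, e2, partFn_perm hmapperm]
    rw [hH]
    simp only []
    congr 1
    rw [hsum]
    abel
  have hC : nabL K H = fun δ => (-1) ^ BK.length * partFn (L2.map sgn) δ := by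
    have := Cstar u K (L2.map sgn) hKdots hW
    rw [hH]
    exact this
  have hcomp : nabL K (PF X r u) = fun γ => c0 * ((-1) ^ BK.length * partFn (L2.map sgn) (γ + B2.sum)) := by
    rw [hPF']
    have e3 : (fun γ => c0 * H (γ + B2.sum)) = (fun γ => c0 * (fun δ => H (δ + B2.sum)) γ) := rfl
    rw [e3, nabL_mul_left, nabL_shift, hC]
  rw [hcomp]
  intro γ hγ
  simp only [Function.mem_support] at hγ
  have hne : partFn (L2.map sgn) (γ + B2.sum) ≠ 0 := by
    intro h0
    apply hγ
    rw [h0, mul_zero, mul_zero]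
  have hcone := partFn_ne_zero_mem_cone hne
  have hWs : ∀ w ∈ L2.map sgn, castV w ∈ s := by
    intro w hw
    rw [List.mem_map] at hw
    obtain ⟨a, ha, rfl⟩ := hw
    have has : castV a ∈ s := by
      rw [hL2, List.mem_filter] at ha
      simpa using ha.2
    rw [hsgn]
    by_cases hp : 0 < dotR u (castV a)
    · simpa [hp] using has
    · simp only [hp, if_false]
      rw [castV_neg]
      exact Submodule.neg_mem s has
  have h1 : castV (γ + B2.sum) ∈ s := cone_subset_of_mem hWs hcone
  have h2 : castV B2.sum ∈ s := by
    apply list_sum_castV_mem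
    intro b hb
    rw [hB2, List.mem_filter, hL2, List.mem_filter] at hb
    simpa using hb.1.2
  show castV γ ∈ s
  have : castV γ = castV (γ + B2.sum) - castV B2.sum := by
    rw [castV_add]; abel
  rw [this]
  exact Submodule.sub_mem s h1 h2

end C8
section C9
variable {ι : Type*} [Fintype ι]

theorem part2 (X : List (ZLat ι)) (r : Submodule ℝ (Amb ι))
    (g : ZLat ι → ℤ) (hg : memFrel X r g) :
    ∃ f : ZLat ι → ℤ, memF X f ∧ nabOut X r f = g := by
  obtain ⟨hsupp, hmemF⟩ := hg
  obtain ⟨u, hreg⟩ := exists_reg X r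
  set S := signedOut X r u with hS
  have hu : ∀ v ∈ r, dotR u v = 0 := hreg.1
  have hLdots : ∀ a ∈ outSub X r, dotR u (castV a) ≠ 0 := by
    intro a ha
    rw [mem_outSub] at ha
    exact hreg.2 a ha.1 ha.2
  have hSpos : ∀ w ∈ S, 0 < dotR u (castV w) := by
    intro w hw
    rw [hS, signedOut, List.mem_map] at hw
    obtain ⟨a, ha, rfl⟩ := hw
    exact sgn_pos u (hLdots a ha)
  have hGg : GGp r g := fun μ hμ => hsupp hμ
  have hHPF : HGp S (PF X r u) := by
    refine ⟨{(negPart X r u).sum}, ?_⟩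
    intro ν hν
    refine ⟨(negPart X r u).sum, Finset.mem_singleton_self _, ?_⟩
    rw [PF] at hν
    exact partFn_ne_zero_mem_cone (fun h0 => hν (by rw [h0, mul_zero]))
  refine ⟨conv (PF X r u) g, ?_, ?_⟩
  · -- memF X (conv PF g)
    intro s hs
    -- split X \ s
    have hperm : List.Perm (outSub X s)
        ((outSub X r).filter (fun a => decide (castV a ∉ s))
          ++ (inSub X r).filter (fun a => decide (castV a ∉ s))) := by
      have e1 : (outSub X r).filter (fun a => decide (castV a ∉ s))
          = X.filter (fun a => decide (castV a ∉ s) && decide (castV a ∉ r)) := by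
        rw [outSub, List.filter_filter]
      have e2 : (inSub X r).filter (fun a => decide (castV a ∉ s))
          = X.filter (fun a => decide (castV a ∉ s) && decide (castV a ∈ r)) := by
        rw [inSub, List.filter_filter]
      rw [e1, e2]
      apply filter_perm_split
      · intro a _
        by_cases h1 : castV a ∈ s <;> by_cases h2 : castV a ∈ r <;> simp [h1, h2]
      · intro a _
        rintro ⟨h1, h2⟩
        simp only [Bool.and_eq_true, decide_eq_true_eq] at h1 h2
        exact h1.2 h2.2
    rw [nabOut, nabL_perm hperm, nabL_append]
    set K := (outSub X r).filter (fun a => decide (castV a ∉ s)) with hK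
    set M1 := (inSub X r).filter (fun a => decide (castV a ∉ s)) with hM1
    have hM1r : ∀ a ∈ M1, castV a ∈ r := by
      intro a ha
      rw [hM1, List.mem_filter] at ha
      exact (mem_inSub.mp ha.1).2
    rw [nabL_conv_right_S hu hSpos M1 hM1r hHPF hGg]
    set gM := nabL M1 g with hgM
    have hGgM : GGp r gM := GGp_nabL hM1r hGg
    rw [nabL_conv_left_S hu hSpos K hHPF hGgM]
    -- support bounds
    have hsuppPF : Function.support (nabL K (PF X r u)) ⊆ {γ | castV γ ∈ s} :=
      suppPart2 X r u hreg s
    have hsuppgM : Function.support gM ⊆ {γ | castV γ ∈ s} := by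
      set s'' := spanOf ((inSub X r).filter (fun a => decide (castV a ∈ s))) with hs''
      have hs''le : s'' ≤ s := by
        rw [hs'', spanOf, Submodule.span_le]
        rintro _ ⟨a, ha, rfl⟩
        rw [Set.mem_setOf_eq, List.mem_filter] at ha
        simpa using ha.2
      have hrat : IsRational (inSub X r) s'' :=
        ⟨(inSub X r).filter (fun a => decide (castV a ∈ s)),
          fun a ha => List.mem_of_mem_filter ha, rfl⟩
      have hlist : M1 = outSub (inSub X r) s'' := by
        rw [hM1, outSub]
        apply List.filter_congr
        intro a ha
        apply decide_eq_decide.mpr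
        constructor
        · intro h1 h2
          exact h1 (hs''le h2)
        · intro h1 h2
          apply h1
          rw [hs'', spanOf]
          apply Submodule.subset_span
          exact ⟨a, by
            rw [Set.mem_setOf_eq, List.mem_filter]
            exact ⟨ha, by simpa using h2⟩, rfl⟩
      have := hmemF s'' hrat
      rw [nabOut, ← hlist] at this
      rw [hgM]
      exact fun γ hγ => hs''le (this hγ)
    intro γ hγ
    obtain ⟨μ, h1, h2⟩ := conv_ne_zero hγ
    have hm1 : castV (γ - μ) ∈ s := hsuppPF h1
    have hm2 : castV μ ∈ s := hsuppgM h2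
    show castV γ ∈ s
    have : castV γ = castV (γ - μ) + castV μ := by rw [castV_sub]; abel
    rw [this]
    exact Submodule.add_mem s hm1 hm2
  · -- nabOut X r (conv PF g) = g
    rw [nabOut, nabL_conv_left_S hu hSpos (outSub X r) hHPF hGg]
    rw [show nabL (outSub X r) (PF X r u) = delta0 from nabOut_PF X r u hreg]
    exact conv_delta0 g

end C9


/-- For every rational subspace `r`, the operator `∇_{X\r}` maps `𝓕(X)` surjectively onto
`𝓕(X∩r)`. -/
theorem nabOut_surjective {ι : Type*} [Fintype ι] (X : List (ZLat ι))
    (hX0 : ∀ a ∈ X, a ≠ 0) (hspan : spanOf X = ⊤)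
    (r : Submodule ℝ (Amb ι)) (hr : IsRational X r) :
    (∀ f : ZLat ι → ℤ, memF X f → memFrel X r (nabOut X r f)) ∧
    ∀ g : ZLat ι → ℤ, memFrel X r g → ∃ f : ZLat ι → ℤ, memF X f ∧ nabOut X r f = g := by
  constructor
  · exact fun f hf => part1 X r hr f hf
  · exact fun g hg => part2 X r g hg
end
end

section
/- (Localization theorem) Let τ be a tope and let F = (F_r) be an X-regular collection that is non-positive on τ (for each proper rational subspace r there exist u ∈ F_r and x₀ ∈ τ with ⟨u, x₀⟩ < 0). If f ∈ F(X) has F-decomposition f = Σ_r f_r, then the component f_V lies in DM(X) and f(γ) = f_V(γ) for all γ ∈ Γ ∩ (τ - B(X)), where B(X) = {Σ t_i a_i : 0 ≤ t_i ≤ 1} is the zonotope of X. -/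
set_option linter.unusedSectionVars false


open Function

attribute [local instance] Classical.propDecidable

noncomputable section

variable {ι : Type*} [Fintype ι]

namespace LocAux

variable {ι : Type*} [Fintype ι]

lemma castV_zero : castV (0 : ZLat ι) = 0 := by funext i; simp [castV]

lemma castV_add (a b : ZLat ι) : castV (a + b) = castV a + castV b := by
  funext i; simp [castV]

lemma castV_neg (a : ZLat ι) : castV (-a) = -castV a := by
  funext i; simp [castV]

lemma castV_zsmul (n : ℤ) (a : ZLat ι) : castV (n • a) = (n : ℝ) • castV a := by
  funext i; simp [castV]

lemma castV_finsum {α : Type*} (s : Finset α) (v : α → ZLat ι) :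
    castV (∑ i ∈ s, v i) = ∑ i ∈ s, castV (v i) := by
  funext j; simp [castV, Finset.sum_apply]

lemma castV_listSum (l : List (ZLat ι)) : castV l.sum = (l.map castV).sum := by
  induction l with
  | nil => simpa using castV_zero
  | cons a l ih => simp [castV_add, ih]

lemma dotR_zero (u : Amb ι) : dotR u 0 = 0 := by simp [dotR]

lemma dotR_add (u a b : Amb ι) : dotR u (a + b) = dotR u a + dotR u b := by
  simp [dotR, mul_add, Finset.sum_add_distrib]

lemma dotR_neg (u a : Amb ι) : dotR u (-a) = -dotR u a := by
  simp [dotR, ← Finset.sum_neg_distrib]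

lemma dotR_smul (u : Amb ι) (c : ℝ) (a : Amb ι) : dotR u (c • a) = c * dotR u a := by
  simp only [dotR, Finset.mul_sum, Pi.smul_apply, smul_eq_mul]
  exact Finset.sum_congr rfl (fun i _ => by ring)

lemma outSub_top (X : List (ZLat ι)) : outSub X ⊤ = [] := by
  simp [outSub, List.filter_eq_nil_iff]

lemma inSub_top (X : List (ZLat ι)) : inSub X ⊤ = X := by
  rw [inSub, List.filter_eq_self]
  intro a _; simp

lemma negPart_top (X : List (ZLat ι)) (u : Amb ι) : _root_.negPart X ⊤ u = [] := by
  simp [_root_.negPart, outSub_top]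

lemma signedOut_top (X : List (ZLat ι)) (u : Amb ι) : signedOut X ⊤ u = [] := by
  simp [signedOut, outSub_top]

lemma partFn_nil (γ : ZLat ι) : partFn ([] : List (ZLat ι)) γ = if γ = 0 then 1 else 0 := by
  unfold partFn
  split
  · rename_i h
    subst h
    haveI : Unique {k : Fin (List.length ([] : List (ZLat ι))) → ℕ //
        ∑ i, (k i : ℤ) • List.get ([] : List (ZLat ι)) i = 0} :=
      ⟨⟨⟨fun i => i.elim0, by simp⟩⟩, by
        rintro ⟨k, hk⟩; apply Subtype.ext; funext i; exact i.elim0⟩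
    simp [Nat.card_unique]
  · rename_i h
    haveI : IsEmpty {k : Fin (List.length ([] : List (ZLat ι))) → ℕ //
        ∑ i, (k i : ℤ) • List.get ([] : List (ZLat ι)) i = γ} := by
      constructor
      rintro ⟨k, hk⟩
      apply h
      rw [← hk]
      simp
    rw [Nat.card_of_isEmpty]
    simp

lemma PF_top (X : List (ZLat ι)) (u : Amb ι) (γ : ZLat ι) :
    PF X ⊤ u γ = if γ = 0 then 1 else 0 := by
  simp [PF, _root_.negPart, outSub_top, negPart_top, signedOut_top, partFn_nil]

lemma conv_PFtop (X : List (ZLat ι)) (u : Amb ι) (g : ZLat ι → ℤ) :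
    conv (PF X ⊤ u) g = g := by
  funext γ
  unfold conv
  rw [finsum_eq_single (fun μ => PF X ⊤ u (γ - μ) * g μ) γ
    (fun μ hμ => by simp [PF_top, sub_eq_zero]; intro h; exact absurd h.symm hμ)]
  simp [PF_top]


abbrev NN : Type := {c : ℝ // 0 ≤ c}

lemma nn_smul_def (c : NN) (v : Amb ι) : c • v = (c : ℝ) • v := rfl

/-- The generating list of the cone `S = r + C(A, -B)`. -/
def genList (X : List (ZLat ι)) (r : Submodule ℝ (Amb ι)) (u : Amb ι) : List (Amb ι) :=
  (inSub X r).map castV ++ (inSub X r).map (fun a => -castV a) ++ (signedOut X r u).map castV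

def genSet (X : List (ZLat ι)) (r : Submodule ℝ (Amb ι)) (u : Amb ι) : Set (Amb ι) :=
  {v | v ∈ genList X r u}

lemma mem_inSub {X : List (ZLat ι)} {r : Submodule ℝ (Amb ι)} {a : ZLat ι} :
    a ∈ inSub X r ↔ a ∈ X ∧ castV a ∈ r := by
  simp [inSub, List.mem_filter]

lemma mem_outSub {X : List (ZLat ι)} {r : Submodule ℝ (Amb ι)} {a : ZLat ι} :
    a ∈ outSub X r ↔ a ∈ X ∧ castV a ∉ r := by
  simp [outSub, List.mem_filter]

lemma mem_genList_cases {X : List (ZLat ι)} {r : Submodule ℝ (Amb ι)} {u : Amb ι} {v : Amb ι}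
    (hv : v ∈ genList X r u) :
    (∃ a, a ∈ inSub X r ∧ (v = castV a ∨ v = -castV a)) ∨
    (∃ a, a ∈ outSub X r ∧ v = castV (if 0 < dotR u (castV a) then a else -a)) := by
  simp only [genList, List.mem_append, List.mem_map, signedOut] at hv
  rcases hv with (⟨a, ha, rfl⟩ | ⟨a, ha, rfl⟩) | ⟨b, ⟨a, ha, rfl⟩, rfl⟩
  · exact Or.inl ⟨a, ha, Or.inl rfl⟩
  · exact Or.inl ⟨a, ha, Or.inr rfl⟩
  · exact Or.inr ⟨a, ha, rfl⟩

lemma genList_pm {X : List (ZLat ι)} {r : Submodule ℝ (Amb ι)} {u : Amb ι} {v : Amb ι}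
    (hv : v ∈ genList X r u) : ∃ a ∈ X, v = castV a ∨ v = -castV a := by
  rcases mem_genList_cases hv with ⟨a, ha, h⟩ | ⟨a, ha, rfl⟩
  · exact ⟨a, (mem_inSub.1 ha).1, h⟩
  · refine ⟨a, (mem_outSub.1 ha).1, ?_⟩
    split
    · exact Or.inl rfl
    · exact Or.inr (castV_neg a)

lemma dot_nonneg {X : List (ZLat ι)} {r : Submodule ℝ (Amb ι)} {u : Amb ι} (hu : Reg X r u) :
    ∀ v ∈ Submodule.span NN (genSet X r u), 0 ≤ dotR u v := by
  intro v hv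
  induction hv using Submodule.span_induction with
  | mem x hx =>
      rcases mem_genList_cases hx with ⟨a, ha, h⟩ | ⟨a, ha, rfl⟩
      · obtain ⟨-, har⟩ := mem_inSub.1 ha
        rcases h with rfl | rfl
        · rw [hu.1 _ har]
        · rw [dotR_neg, hu.1 _ har]; simp
      · obtain ⟨haX, har⟩ := mem_outSub.1 ha
        have hne := hu.2 a haX har
        split
        · rename_i h; exact h.le
        · rename_i h
          rw [castV_neg, dotR_neg]
          have : dotR u (castV a) < 0 := lt_of_le_of_ne (not_lt.1 h) hne
          linarith
  | zero => rw [dotR_zero]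
  | add x y hx hy ihx ihy => rw [dotR_add]; positivity
  | smul c x hx ihx =>
      rw [nn_smul_def, dotR_smul]
      exact mul_nonneg c.2 ihx

lemma r_sub_S (X : List (ZLat ι)) (r : Submodule ℝ (Amb ι)) (u : Amb ι)
    (Yr : List (ZLat ι)) (hYrX : ∀ a ∈ Yr, a ∈ X) (hrY : r = spanOf Yr) :
    ∀ v ∈ r, v ∈ Submodule.span NN (genSet X r u) := by
  intro v hv
  rw [hrY] at hv
  have H : ∀ w ∈ Submodule.span ℝ (castV '' {a | a ∈ Yr}),
      w ∈ Submodule.span NN (genSet X r u) ∧ -w ∈ Submodule.span NN (genSet X r u) := by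
    intro w hw
    induction hw using Submodule.span_induction with
    | mem x hx =>
        obtain ⟨a, ha, rfl⟩ := hx
        have haIn : a ∈ inSub X r := mem_inSub.2 ⟨hYrX a ha, by
          rw [hrY]; exact Submodule.subset_span ⟨a, ha, rfl⟩⟩
        constructor
        · exact Submodule.subset_span (by
            simp only [genSet, genList, Set.mem_setOf_eq, List.mem_append, List.mem_map]
            exact Or.inl (Or.inl ⟨a, haIn, rfl⟩))
        · exact Submodule.subset_span (by
            simp only [genSet, genList, Set.mem_setOf_eq, List.mem_append, List.mem_map]
            exact Or.inl (Or.inr ⟨a, haIn, rfl⟩))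
    | zero => simpa using ⟨Submodule.zero_mem _, Submodule.zero_mem _⟩
    | add x y hx hy ihx ihy =>
        exact ⟨Submodule.add_mem _ ihx.1 ihy.1, by
          rw [neg_add]; exact Submodule.add_mem _ ihx.2 ihy.2⟩
    | smul c x hx ihx =>
        rcases le_or_gt 0 c with hc | hc
        · refine ⟨?_, ?_⟩
          · exact Submodule.smul_mem _ (⟨c, hc⟩ : NN) ihx.1
          · rw [← smul_neg]
            exact Submodule.smul_mem _ (⟨c, hc⟩ : NN) ihx.2
        · have h1 : c • x = (-c) • (-x) := by simp
          have h2 : -(c • x) = (-c) • x := by simp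
          refine ⟨?_, ?_⟩
          · rw [h1]; exact Submodule.smul_mem _ (⟨-c, by linarith⟩ : NN) ihx.2
          · rw [h2]; exact Submodule.smul_mem _ (⟨-c, by linarith⟩ : NN) ihx.1
  exact (H v hv).1

lemma listcomb_mem (X : List (ZLat ι)) (r : Submodule ℝ (Amb ι)) (u : Amb ι)
    (L : List (ZLat ι)) (hL : ∀ a ∈ L, castV a ∈ genSet X r u)
    (t : Fin L.length → ℝ) (ht : ∀ i, 0 ≤ t i) :
    ∑ i, t i • castV (L.get i) ∈ Submodule.span NN (genSet X r u) := by
  refine Submodule.sum_mem _ (fun i _ => ?_)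
  have : t i • castV (L.get i) = (⟨t i, ht i⟩ : NN) • castV (L.get i) := rfl
  rw [this]
  exact Submodule.smul_mem _ _ (Submodule.subset_span (hL _ (List.get_mem L i)))

lemma list_filter_sum {α M : Type*} [AddCommMonoid M] (l : List α) (p : α → Bool) (f : α → M) :
    ((l.filter p).map f).sum = ∑ i : Fin l.length, if p (l.get i) then f (l.get i) else 0 := by
  induction l with
  | nil => simp
  | cons a l ih =>
      simp only [List.length_cons]
      rw [Fin.sum_univ_succ]
      by_cases h : p a <;> simp [List.filter_cons, h, ih]


lemma signedOut_mem_genSet {X : List (ZLat ι)} {r : Submodule ℝ (Amb ι)} {u : Amb ι} :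
    ∀ a ∈ signedOut X r u, castV a ∈ genSet X r u := by
  intro a ha
  simp only [genSet, genList, Set.mem_setOf_eq, List.mem_append, List.mem_map]
  exact Or.inr ⟨a, ha, rfl⟩

lemma zono_shift {X : List (ZLat ι)} {r : Submodule ℝ (Amb ι)} {u : Amb ι} (hu : Reg X r u)
    (hrS : ∀ v ∈ r, v ∈ Submodule.span NN (genSet X r u)) :
    ∀ z ∈ zono X, z - castV ((_root_.negPart X r u).sum) ∈ Submodule.span NN (genSet X r u) := by
  rintro z ⟨t, ht, rfl⟩
  have hnp : _root_.negPart X r u =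
      X.filter (fun a => decide (dotR u (castV a) < 0) && decide (castV a ∉ r)) := by
    rw [_root_.negPart, outSub, List.filter_filter]
  rw [castV_listSum, hnp, list_filter_sum, ← Finset.sum_sub_distrib]
  refine Submodule.sum_mem _ (fun i _ => ?_)
  set a := X.get i with ha
  have haX : a ∈ X := List.get_mem X i
  by_cases har : castV a ∈ r
  · have hcond : (decide (dotR u (castV a) < 0) && decide (castV a ∉ r)) = false := by
      simp [har]
    rw [hcond]
    simp only [Bool.false_eq_true, if_false, sub_zero]
    exact hrS _ (Submodule.smul_mem _ _ har)
  · rcases (hu.2 _ haX har).lt_or_gt with hlt | hgt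
    · have hcond : (decide (dotR u (castV a) < 0) && decide (castV a ∉ r)) = true := by
        simp [har, hlt]
      rw [hcond, if_pos rfl]
      have heq : t i • castV a - castV a = (1 - t i) • (-castV a) := by
        rw [smul_neg, sub_smul, one_smul, neg_sub]
      rw [heq]
      have hmem : -castV a ∈ genSet X r u := by
        simp only [genSet, genList, Set.mem_setOf_eq, List.mem_append, List.mem_map, signedOut]
        refine Or.inr ⟨_, ⟨a, mem_outSub.2 ⟨haX, har⟩, rfl⟩, ?_⟩
        rw [if_neg (by linarith), castV_neg]
      have hns : (1 - t i) • (-castV a)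
          = (⟨1 - t i, by linarith [(ht i).2]⟩ : NN) • (-castV a) := rfl
      rw [hns]
      exact Submodule.smul_mem _ _ (Submodule.subset_span hmem)
    · have hcond : (decide (dotR u (castV a) < 0) && decide (castV a ∉ r)) = false := by
        simp [not_lt.2 hgt.le]
      rw [hcond]
      simp only [Bool.false_eq_true, if_false, sub_zero]
      have hmem : castV a ∈ genSet X r u := by
        simp only [genSet, genList, Set.mem_setOf_eq, List.mem_append, List.mem_map, signedOut]
        exact Or.inr ⟨_, ⟨a, mem_outSub.2 ⟨haX, har⟩, rfl⟩, by rw [if_pos hgt]⟩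
      have hns : t i • castV a = (⟨t i, (ht i).1⟩ : NN) • castV a := rfl
      rw [hns]
      exact Submodule.smul_mem _ _ (Submodule.subset_span hmem)

lemma cara_aux :
    ∀ (n : ℕ) (G : Finset (Amb ι)) (f : Amb ι → ℝ), (∀ v, 0 ≤ f v) →
    (G.filter (fun v => f v ≠ 0)).card ≤ n →
    ∃ s : Finset (Amb ι), s ⊆ G ∧ LinearIndependent ℝ (fun v : s => (v : Amb ι)) ∧
      ∃ g : Amb ι → ℝ, (∀ v, 0 ≤ g v) ∧ ∑ v ∈ s, g v • v = ∑ v ∈ G, f v • v := by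
  intro n
  induction n with
  | zero =>
      intro G f hf hcard
      have hall : ∀ v ∈ G, f v • v = 0 := by
        intro v hv
        by_contra h
        have : v ∈ G.filter (fun v => f v ≠ 0) :=
          Finset.mem_filter.2 ⟨hv, fun h0 => h (by rw [h0, zero_smul])⟩
        have := Finset.card_pos.2 ⟨v, this⟩
        omega
      refine ⟨∅, Finset.empty_subset _, linearIndependent_empty_type, fun _ => 0, fun _ => le_refl 0, ?_⟩
      rw [Finset.sum_empty, Finset.sum_congr rfl hall, Finset.sum_const, smul_zero]
  | succ n ih =>
      intro G f hf hcard
      set T := G.filter (fun v => f v ≠ 0) with hT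
      have hsum : ∑ v ∈ T, f v • v = ∑ v ∈ G, f v • v :=
        Finset.sum_filter_of_ne (fun v _ h => fun h0 => h (by rw [h0, zero_smul]))
      by_cases hind : LinearIndependent ℝ (fun v : T => (v : Amb ι))
      · exact ⟨T, Finset.filter_subset _ _, hind, f, hf, hsum⟩
      · obtain ⟨c, hc0, i₀, hi₀⟩ := Fintype.not_linearIndependent_iff.1 hind
        have hex : ∃ c : T → ℝ, (∑ i, c i • (i : Amb ι)) = 0 ∧ ∃ i, 0 < c i := by
          rcases lt_trichotomy (c i₀) 0 with h | h | h
          · refine ⟨-c, by simpa using hc0, i₀, by simpa using h⟩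
          · exact absurd h hi₀
          · exact ⟨c, hc0, i₀, h⟩
        clear hc0 hi₀ hind
        obtain ⟨c, hc0, i₀, hipos⟩ := hex
        set c' : Amb ι → ℝ := fun v => if h : v ∈ T then c ⟨v, h⟩ else 0 with hc'
        have hc'T : ∀ (i : T), c' (i : Amb ι) = c i := by
          rintro ⟨v, hv⟩
          rw [hc']
          dsimp only
          rw [dif_pos hv]
        set P := T.filter (fun v => 0 < c' v) with hP
        have hPne : P.Nonempty := ⟨(i₀ : Amb ι), Finset.mem_filter.2 ⟨i₀.2, by
          rw [hc'T i₀]; exact hipos⟩⟩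
        obtain ⟨v₀, hv₀P, hmin⟩ := P.exists_min_image (fun v => f v / c' v) hPne
        have hv₀T : v₀ ∈ T := (Finset.mem_filter.1 hv₀P).1
        have hc'v₀ : 0 < c' v₀ := (Finset.mem_filter.1 hv₀P).2
        set lam := f v₀ / c' v₀ with hlam
        have hlam0 : 0 ≤ lam := div_nonneg (hf v₀) hc'v₀.le
        set g : Amb ι → ℝ := fun v => if v ∈ T then f v - lam * c' v else 0 with hg
        have hg0 : ∀ v, 0 ≤ g v := by
          intro v
          rw [hg]
          dsimp only
          split
          · rename_i hvT
            rcases le_or_gt (c' v) 0 with h | h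
            · nlinarith [hf v]
            · have hvP : v ∈ P := Finset.mem_filter.2 ⟨hvT, h⟩
              have := hmin v hvP
              rw [le_div_iff₀ h] at this
              linarith
          · exact le_refl 0
        have hgv₀ : g v₀ = 0 := by
          rw [hg]
          dsimp only
          rw [if_pos hv₀T, hlam, div_mul_cancel₀ _ (ne_of_gt hc'v₀), sub_self]
        have hTc : ∑ v ∈ T, c' v • v = 0 := by
          rw [← Finset.sum_coe_sort T (fun v => c' v • v)]
          rw [← hc0]
          exact Finset.sum_congr rfl (fun i _ => by rw [hc'T i])
        have hsum2 : ∑ v ∈ G, g v • v = ∑ v ∈ G, f v • v := by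
          have h1 : ∑ v ∈ T, g v • v = ∑ v ∈ G, g v • v := by
            rw [hT]
            refine Finset.sum_filter_of_ne (fun v hv h => ?_)
            by_contra h0
            apply h
            have : g v = 0 := by rw [hg]; dsimp only; rw [if_neg]; simp [hT, hv, h0]
            rw [this, zero_smul]
          rw [← h1, ← hsum]
          have h2 : ∀ v ∈ T, g v • v = f v • v - lam • (c' v • v) := by
            intro v hv
            rw [hg]
            dsimp only
            rw [if_pos hv, sub_smul, smul_smul]
          rw [Finset.sum_congr rfl h2, Finset.sum_sub_distrib, ← Finset.smul_sum, hTc,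
            smul_zero, sub_zero]
        have hcard2 : (G.filter (fun v => g v ≠ 0)).card ≤ n := by
          have hsub : G.filter (fun v => g v ≠ 0) ⊆ T.erase v₀ := by
            intro v hv
            have hvG := (Finset.mem_filter.1 hv).1
            have hvg := (Finset.mem_filter.1 hv).2
            have hvT : v ∈ T := by
              by_contra h0
              exact hvg (by rw [hg]; dsimp only; rw [if_neg h0])
            refine Finset.mem_erase.2 ⟨?_, hvT⟩
            rintro rfl
            exact hvg hgv₀
          have := Finset.card_le_card hsub
          have hce : (T.erase v₀).card = T.card - 1 := Finset.card_erase_of_mem hv₀T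
          have hTpos : 0 < T.card := Finset.card_pos.2 ⟨v₀, hv₀T⟩
          omega
        obtain ⟨s, hs, hind2, g2, hg2, hsum3⟩ := ih G g hg0 hcard2
        exact ⟨s, hs, hind2, g2, hg2, hsum3.trans hsum2⟩

lemma cara (G : Finset (Amb ι)) {x : Amb ι}
    (hx : x ∈ Submodule.span NN ((G : Set (Amb ι)))) :
    ∃ s : Finset (Amb ι), s ⊆ G ∧ LinearIndependent ℝ (fun v : s => (v : Amb ι)) ∧
      ∃ g : Amb ι → ℝ, (∀ v, 0 ≤ g v) ∧ ∑ v ∈ s, g v • v = x := by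
  obtain ⟨f, -, hfx⟩ := Submodule.mem_span_finset.1 hx
  obtain ⟨s, hs, hind, g, hg, hsum⟩ := cara_aux G.card G (fun v => (f v : ℝ))
    (fun v => (f v).2) (Finset.card_filter_le _ _)
  exact ⟨s, hs, hind, g, hg, by rw [hsum, ← hfx]; exact Finset.sum_congr rfl (fun v _ => rfl)⟩


/-- The linear map sending coefficients to the corresponding combination. -/
def combMap (s : Finset (Amb ι)) : ({v // v ∈ s} → ℝ) →ₗ[ℝ] Amb ι where
  toFun t := ∑ i, t i • (i : Amb ι)
  map_add' t1 t2 := by simp [add_smul, Finset.sum_add_distrib]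
  map_smul' c t := by simp [smul_smul, Finset.smul_sum]

lemma orth_closed (s : Finset (Amb ι)) : IsClosed {t : {v // v ∈ s} → ℝ | ∀ i, 0 ≤ t i} := by
  have : {t : {v // v ∈ s} → ℝ | ∀ i, 0 ≤ t i} = ⋂ i, {t | 0 ≤ t i} := by
    ext t; simp [Set.mem_iInter]
  rw [this]
  exact isClosed_iInter (fun i => isClosed_le continuous_const (continuous_apply i))

lemma S_closed (G : Finset (Amb ι)) :
    IsClosed ((Submodule.span NN ((G : Set (Amb ι)))) : Set (Amb ι)) := by
  classical
  have heq : ((Submodule.span NN ((G : Set (Amb ι)))) : Set (Amb ι)) =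
      ⋃ s ∈ {s : Finset (Amb ι) | s ⊆ G ∧ LinearIndependent ℝ (fun v : s => (v : Amb ι))},
        (combMap s) '' {t | ∀ i, 0 ≤ t i} := by
    ext x
    constructor
    · intro hx
      obtain ⟨s, hsG, hind, g, hg, hsum⟩ := cara G hx
      refine Set.mem_biUnion ⟨hsG, hind⟩ ⟨fun i => g i, fun i => hg i, ?_⟩
      show ∑ i : {v // v ∈ s}, g (i : Amb ι) • (i : Amb ι) = x
      rw [Finset.sum_coe_sort s (fun v => g v • v)]
      exact hsum
    · intro hx
      simp only [Set.mem_iUnion, Set.mem_setOf_eq] at hx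
      obtain ⟨s, ⟨hsG, _⟩, t, ht, rfl⟩ := hx
      show (∑ i, t i • (i : Amb ι)) ∈ _
      refine Submodule.sum_mem _ (fun i _ => ?_)
      have : t i • (i : Amb ι) = (⟨t i, ht i⟩ : NN) • (i : Amb ι) := rfl
      rw [this]
      exact Submodule.smul_mem _ _ (Submodule.subset_span (hsG i.2))
  rw [heq]
  refine Set.Finite.isClosed_biUnion ?_ ?_
  · refine Set.Finite.subset (G.powerset : Finset (Finset (Amb ι))).finite_toSet ?_
    intro s hs
    exact Finset.mem_coe.2 (Finset.mem_powerset.2 hs.1)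
  · intro s hs
    have hker : LinearMap.ker (combMap s) = ⊥ := by
      rw [LinearMap.ker_eq_bot']
      intro t htt
      funext i
      exact Fintype.linearIndependent_iff.1 hs.2 t htt i
    exact (LinearMap.isClosedEmbedding_of_injective hker).isClosedMap _ (orth_closed s)

lemma S_mem_cases (G : Finset (Amb ι)) {x : Amb ι}
    (hx : x ∈ Submodule.span NN ((G : Set (Amb ι)))) :
    x ∈ interior ((Submodule.span NN ((G : Set (Amb ι)))) : Set (Amb ι)) ∨
      ∃ s : Finset (Amb ι), s ⊆ G ∧ Submodule.span ℝ ((s : Set (Amb ι))) ≠ ⊤ ∧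
        x ∈ Submodule.span ℝ ((s : Set (Amb ι))) := by
  classical
  obtain ⟨s, hsG, hind, g, hg, hsum⟩ := cara G hx
  by_cases hsp : Submodule.span ℝ ((s : Set (Amb ι))) = ⊤
  · have hB : Module.finrank ℝ (Amb ι) = s.card := by
      let B : Module.Basis s ℝ (Amb ι) := Module.Basis.mk hind (by rw [Subtype.range_coe_subtype, Finset.setOf_mem]; exact hsp.ge)
      rw [Module.finrank_eq_card_basis B, Fintype.card_coe]
    by_cases hzero : ∃ v₀ ∈ s, g v₀ = 0
    · obtain ⟨v₀, hv₀s, hgv₀⟩ := hzero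
      right
      refine ⟨s.erase v₀, (Finset.erase_subset _ _).trans hsG, ?_, ?_⟩
      · intro h
        have h1 := finrank_span_finset_le_card (R := ℝ) (s.erase v₀)
        rw [Set.finrank, h, finrank_top] at h1
        have hce : (s.erase v₀).card = s.card - 1 := Finset.card_erase_of_mem hv₀s
        have hpos : 0 < s.card := Finset.card_pos.2 ⟨v₀, hv₀s⟩
        omega
      · have hxe : x = ∑ v ∈ s.erase v₀, g v • v := by
          rw [← hsum, Finset.sum_erase _ (by rw [hgv₀, zero_smul])]
        rw [hxe]
        exact Submodule.sum_mem _ (fun v hv =>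
          Submodule.smul_mem _ _ (Submodule.subset_span (Finset.mem_coe.2 hv)))
    · left
      push_neg at hzero
      have hgpos : ∀ v ∈ s, 0 < g v := fun v hv => (hg v).lt_of_ne' (hzero v hv)
      let B : Module.Basis s ℝ (Amb ι) := Module.Basis.mk hind (by rw [Subtype.range_coe_subtype, Finset.setOf_mem]; exact hsp.ge)
      let e := B.equivFun
      have hecont : Continuous (e : Amb ι → ({v // v ∈ s} → ℝ)) :=
        LinearMap.continuous_of_finiteDimensional (e : Amb ι →ₗ[ℝ] ({v // v ∈ s} → ℝ))
      have hBi : ∀ i : {v // v ∈ s}, B i = (i : Amb ι) := fun i => Module.Basis.mk_apply hind _ i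
      have hx2 : e.symm (fun i => g (i : Amb ι)) = x := by
        rw [Module.Basis.equivFun_symm_apply, ← hsum]
        calc ∑ i : {v // v ∈ s}, g (i : Amb ι) • B i
            = ∑ i : {v // v ∈ s}, g (i : Amb ι) • (i : Amb ι) :=
              Finset.sum_congr rfl (fun i _ => by rw [hBi])
          _ = ∑ v ∈ s, g v • v := Finset.sum_coe_sort s (fun v => g v • v)
      refine mem_interior.2 ⟨e ⁻¹' {t | ∀ i, 0 < t i}, ?_, ?_, ?_⟩
      · intro w hw
        have hw2 : w = ∑ i : {v // v ∈ s}, e w i • B i := by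
          rw [← Module.Basis.equivFun_symm_apply]
          exact (e.symm_apply_apply w).symm
        rw [SetLike.mem_coe, hw2]
        refine Submodule.sum_mem _ (fun i _ => ?_)
        rw [hBi]
        have hw' : ∀ j, 0 < e w j := hw
        have h0 : (0:ℝ) ≤ e w i := (hw' i).le
        have : e w i • (i : Amb ι) = (⟨e w i, h0⟩ : NN) • (i : Amb ι) := rfl
        rw [this]
        exact Submodule.smul_mem _ _ (Submodule.subset_span (hsG i.2))
      · refine IsOpen.preimage hecont ?_
        have : {t : {v // v ∈ s} → ℝ | ∀ i, 0 < t i} = ⋂ i, {t | 0 < t i} := by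
          ext t; simp [Set.mem_iInter]
        rw [this]
        exact isOpen_iInter_of_finite (fun i => isOpen_lt continuous_const (continuous_apply i))
      · refine Set.mem_preimage.2 ?_
        have : e x ∈ {t : {v // v ∈ s} → ℝ | ∀ i, 0 < t i} := by
          rw [← hx2, e.apply_symm_apply]
          exact fun i => hgpos _ i.2
        exact this
  · right
    refine ⟨s, hsG, hsp, ?_⟩
    rw [← hsum]
    exact Submodule.sum_mem _ (fun v hv =>
      Submodule.smul_mem _ _ (Submodule.subset_span (Finset.mem_coe.2 hv)))


lemma span_pm_eq (X : List (ZLat ι)) (s : Set (Amb ι))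
    (hs : ∀ v ∈ s, ∃ a ∈ X, v = castV a ∨ v = -castV a) :
    ∃ Y' : List (ZLat ι), (∀ a ∈ Y', a ∈ X) ∧ Submodule.span ℝ s = spanOf Y' := by
  classical
  refine ⟨X.filter (fun a => decide (castV a ∈ Submodule.span ℝ s)),
    fun a ha => (List.mem_filter.1 ha).1, ?_⟩
  apply le_antisymm
  · rw [Submodule.span_le]
    intro v hv
    obtain ⟨a, haX, h⟩ := hs v hv
    have hmem : castV a ∈ Submodule.span ℝ s := by
      rcases h with rfl | h
      · exact Submodule.subset_span hv
      · have : castV a = -v := by rw [h, neg_neg]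
        rw [this]
        exact Submodule.neg_mem _ (Submodule.subset_span hv)
    have haY : a ∈ X.filter (fun a => decide (castV a ∈ Submodule.span ℝ s)) :=
      List.mem_filter.2 ⟨haX, by simpa using hmem⟩
    rcases h with rfl | h
    · exact Submodule.subset_span ⟨a, haY, rfl⟩
    · rw [h]
      exact Submodule.neg_mem _ (Submodule.subset_span ⟨a, haY, rfl⟩)
  · rw [spanOf, Submodule.span_le]
    rintro w ⟨a, ha, rfl⟩
    have := (List.mem_filter.1 ha).2
    simpa using this

lemma ext_hyper (X : List (ZLat ι)) (hspan : spanOf X = ⊤) :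
    ∀ (n : ℕ) (Y' : List (ZLat ι)), (∀ a ∈ Y', a ∈ X) →
      Fintype.card ι - Module.finrank ℝ (spanOf Y') ≤ n → spanOf Y' ≠ ⊤ →
      ∃ H, IsRational X H ∧ Module.finrank ℝ H + 1 = Module.finrank ℝ (spanOf X) ∧
        spanOf Y' ≤ H := by
  have hdim : Module.finrank ℝ (Amb ι) = Fintype.card ι := Module.finrank_pi ℝ
  intro n
  induction n with
  | zero =>
      intro Y' hY' hc hne
      exfalso
      have hlt : Module.finrank ℝ (spanOf Y') < Module.finrank ℝ (Amb ι) :=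
        Submodule.finrank_lt hne
      omega
  | succ n ih =>
      intro Y' hY' hc hne
      by_cases hcr : Module.finrank ℝ (spanOf Y') + 1 = Fintype.card ι
      · refine ⟨spanOf Y', ⟨Y', hY', rfl⟩, ?_, le_refl _⟩
        rw [hspan, finrank_top, hdim]
        exact hcr
      · have hex : ∃ a ∈ X, castV a ∉ spanOf Y' := by
          by_contra h
          push_neg at h
          apply hne
          rw [eq_top_iff, ← hspan, spanOf, Submodule.span_le]
          rintro w ⟨a, ha, rfl⟩
          exact h a ha
        obtain ⟨a, haX, haW⟩ := hex
        have ha0 : castV a ≠ 0 := fun h => haW (h ▸ Submodule.zero_mem _)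
        have hset : {b : ZLat ι | b ∈ a :: Y'} = insert a {b | b ∈ Y'} := by
          ext b; simp [List.mem_cons]
        have hW' : spanOf (a :: Y') = Submodule.span ℝ {castV a} ⊔ spanOf Y' := by
          rw [spanOf, hset, Set.image_insert_eq, Submodule.span_insert]
          rfl
        have hlt : spanOf Y' < spanOf (a :: Y') := by
          rw [hW']
          refine lt_of_le_of_ne le_sup_right (fun h => ?_)
          apply haW
          rw [h]
          exact Submodule.mem_sup_left (Submodule.mem_span_singleton_self (castV a))
        have hfr : Module.finrank ℝ (spanOf (a :: Y')) ≤ Module.finrank ℝ (spanOf Y') + 1 := by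
          have h2 := Submodule.finrank_sup_add_finrank_inf_eq
            (Submodule.span ℝ {castV a}) (spanOf Y')
          have h3 : Module.finrank ℝ (Submodule.span ℝ {castV a}) = 1 :=
            finrank_span_singleton ha0
          rw [hW']
          omega
        have hW'ne : spanOf (a :: Y') ≠ ⊤ := by
          intro h
          have he : Module.finrank ℝ (spanOf (a :: Y')) = Fintype.card ι := by
            rw [h, finrank_top, hdim]
          have hlt2 : Module.finrank ℝ (spanOf Y') < Fintype.card ι := by
            have := Submodule.finrank_lt (V := Amb ι) hne
            omega
          omega
        have hstep := Submodule.finrank_lt_finrank_of_lt hlt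
        obtain ⟨H, h1, h2, h3⟩ := ih (a :: Y')
          (by
            intro b hb
            rcases List.mem_cons.1 hb with rfl | hb
            · exact haX
            · exact hY' b hb)
          (by omega) hW'ne
        exact ⟨H, h1, h2, hlt.le.trans h3⟩

lemma key_vanish (X : List (ZLat ι)) (hspan : spanOf X = ⊤) (τ : Set (Amb ι)) (hτ : IsTope X τ)
    (r : Submodule ℝ (Amb ι)) (Yr : List (ZLat ι)) (hYrX : ∀ a ∈ Yr, a ∈ X) (hrY : r = spanOf Yr)
    (u : Amb ι) (hu : Reg X r u) (x₀ : Amb ι) (hx₀ : x₀ ∈ τ) (hx₀neg : dotR u x₀ < 0)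
    (y : Amb ι) (hyτ : y ∈ τ) (hyS : y ∈ Submodule.span NN (genSet X r u)) : False := by
  classical
  set G : Finset (Amb ι) := (genList X r u).toFinset with hG
  have hGset : (G : Set (Amb ι)) = genSet X r u := by
    ext v; simp [hG, genSet, List.mem_toFinset]
  rw [← hGset] at hyS
  obtain ⟨v, hv, hτeq⟩ := hτ
  have hτpre : IsPreconnected τ := by rw [hτeq]; exact isPreconnected_connectedComponentIn
  have hτsub : τ ⊆ (spanOf X : Set (Amb ι)) \ hyperUnion X := by
    rw [hτeq]; exact connectedComponentIn_subset _ _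
  have hτhyp : ∀ w ∈ τ, w ∉ hyperUnion X := fun w hw => (hτsub hw).2
  have hint : ∀ w ∈ Submodule.span NN ((G : Set (Amb ι))), w ∉ hyperUnion X →
      w ∈ interior ((Submodule.span NN ((G : Set (Amb ι)))) : Set (Amb ι)) := by
    intro w hw hwh
    rcases S_mem_cases G hw with h | ⟨s, hsG, hsne, hws⟩
    · exact h
    · exfalso
      apply hwh
      have hs' : ∀ v' ∈ (s : Set (Amb ι)), ∃ a ∈ X, v' = castV a ∨ v' = -castV a := by
        intro v' hv'
        have : v' ∈ genSet X r u := by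
          rw [← hGset]
          exact Finset.coe_subset.2 hsG hv'
        exact genList_pm this
      obtain ⟨Y', hY'X, hY'eq⟩ := span_pm_eq X (s : Set (Amb ι)) hs'
      rw [hY'eq] at hsne hws
      obtain ⟨H, hH1, hH2, hH3⟩ := ext_hyper X hspan (Fintype.card ι) Y' hY'X (by omega) hsne
      exact ⟨H, hH1, hH2, hH3 hws⟩
  have hx₀S : x₀ ∉ ((Submodule.span NN ((G : Set (Amb ι)))) : Set (Amb ι)) := by
    intro h
    have := dot_nonneg hu x₀ (by rwa [hGset] at h)
    linarith
  obtain ⟨q, hqτ, hq1, hq2⟩ := hτpre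
    (interior ((Submodule.span NN ((G : Set (Amb ι)))) : Set (Amb ι)))
    (((Submodule.span NN ((G : Set (Amb ι)))) : Set (Amb ι))ᶜ)
    isOpen_interior (S_closed G).isOpen_compl
    (fun w hw => by
      by_cases h : w ∈ Submodule.span NN ((G : Set (Amb ι)))
      · exact Or.inl (hint w h (hτhyp w hw))
      · exact Or.inr h)
    ⟨y, hyτ, hint y hyS (hτhyp y hyτ)⟩
    ⟨x₀, hx₀, hx₀S⟩
  exact hq2 (interior_subset hq1)

end LocAux





/-- Localization theorem: let `τ` be a tope and `(F_r ∋ u r)` an `X`-regular collection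
non-positive on `τ`.  If `f ∈ 𝓕(X)` has `F`-decomposition `f = ∑_r 𝓟_{X\r}^{F_r} * g_r`,
then the component for `r = V` lies in `DM(X)` and coincides with `f` on
`Γ ∩ (τ - B(X))`. -/
theorem localization {ι : Type*} [Fintype ι] (X : List (ZLat ι))
    (hX0 : ∀ a ∈ X, a ≠ 0) (hspan : spanOf X = ⊤)
    (τ : Set (Amb ι)) (hτ : IsTope X τ)
    (u : Submodule ℝ (Amb ι) → Amb ι) (hu : ∀ r, IsRational X r → Reg X r (u r))
    (hneg : ∀ r, IsRational X r → r ≠ ⊤ → ∃ x₀ ∈ τ, dotR (u r) x₀ < 0)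
    (f : ZLat ι → ℤ) (hf : memF X f)
    (g : Submodule ℝ (Amb ι) → (ZLat ι → ℤ))
    (hg₁ : ∀ r, IsRational X r → memDMrel X r (g r))
    (hg₂ : ∀ r, ¬ IsRational X r → g r = 0)
    (hdec : ∀ γ, f γ = ∑ᶠ r, conv (PF X r (u r)) (g r) γ) :
    memDM X (conv (PF X ⊤ (u ⊤)) (g ⊤)) ∧
    ∀ γ : ZLat ι, castV γ ∈ sdiffSet τ (zono X) →
      f γ = conv (PF X ⊤ (u ⊤)) (g ⊤) γ := by
    classical
  have hratT : IsRational X ⊤ := ⟨X, fun a ha => ha, hspan.symm⟩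
  have hkey : ∀ r, IsRational X r → r ≠ ⊤ → ∀ γ : ZLat ι, castV γ ∈ sdiffSet τ (zono X) →
      conv (PF X r (u r)) (g r) γ = 0 := by
    intro r hr hrne γ hγ
    obtain ⟨Yr, hYrX, hrY⟩ := hr
    have hrat : IsRational X r := ⟨Yr, hYrX, hrY⟩
    obtain ⟨x₀, hx₀τ, hx₀neg⟩ := hneg r hrat hrne
    obtain ⟨yy, hyyτ, z, hz, hγeq⟩ := hγ
    have hterm : ∀ μ, PF X r (u r) (γ - μ) * g r μ = 0 := by
      intro μ
      by_cases hgμ : g r μ = 0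
      · rw [hgμ, mul_zero]
      · have hμr : castV μ ∈ r := (hg₁ r hrat).1 hgμ
        have hemp : IsEmpty {k : Fin (signedOut X r (u r)).length → ℕ //
            ∑ i, (k i : ℤ) • (signedOut X r (u r)).get i
              = (γ - μ) + (negPart X r (u r)).sum} := by
          constructor
          rintro ⟨k, hk⟩
          apply LocAux.key_vanish X hspan τ hτ r Yr hYrX hrY (u r) (hu r hrat)
            x₀ hx₀τ hx₀neg yy hyyτ
          have hy : yy = castV γ + z := by rw [hγeq]; abel
          have hcast := congrArg castV hk
          rw [LocAux.castV_finsum, LocAux.castV_add] at hcast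
          have hsum1 : ∑ i, ((k i : ℝ)) • castV ((signedOut X r (u r)).get i)
              = castV (γ - μ) + castV ((negPart X r (u r)).sum) := by
            rw [← hcast]
            exact Finset.sum_congr rfl (fun i _ => by
              rw [LocAux.castV_zsmul, Int.cast_natCast])
          have hrS := LocAux.r_sub_S X r (u r) Yr hYrX hrY
          have hm1 : castV μ ∈ Submodule.span LocAux.NN (LocAux.genSet X r (u r)) := hrS _ hμr
          have hm2 : ∑ i, ((k i : ℝ)) • castV ((signedOut X r (u r)).get i)
              ∈ Submodule.span LocAux.NN (LocAux.genSet X r (u r)) :=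
            LocAux.listcomb_mem X r (u r) _ LocAux.signedOut_mem_genSet _
              (fun i => Nat.cast_nonneg _)
          have hm3 : z - castV ((negPart X r (u r)).sum)
              ∈ Submodule.span LocAux.NN (LocAux.genSet X r (u r)) :=
            LocAux.zono_shift (hu r hrat) hrS z hz
          have hyeq : yy = castV μ + (∑ i, ((k i : ℝ)) • castV ((signedOut X r (u r)).get i))
              + (z - castV ((negPart X r (u r)).sum)) := by
            rw [hsum1]
            have h5 : castV γ = castV μ + castV (γ - μ) := by
              rw [← LocAux.castV_add, show μ + (γ - μ) = γ from by abel]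
            rw [hy, h5]
            abel
          rw [hyeq]
          exact Submodule.add_mem _ (Submodule.add_mem _ hm1 hm2) hm3
        have hpart : partFn (signedOut X r (u r)) ((γ - μ) + (negPart X r (u r)).sum) = 0 := by
          haveI := hemp
          unfold partFn
          rw [Nat.card_of_isEmpty]
          simp
        have hPF0 : PF X r (u r) (γ - μ) = 0 := by
          unfold PF
          rw [hpart, mul_zero]
        rw [hPF0, zero_mul]
    show (∑ᶠ μ, PF X r (u r) (γ - μ) * g r μ) = 0
    calc (∑ᶠ μ, PF X r (u r) (γ - μ) * g r μ) = ∑ᶠ _ : ZLat ι, (0:ℤ) := finsum_congr hterm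
      _ = 0 := finsum_zero
  constructor
  · rw [LocAux.conv_PFtop]
    have h := (hg₁ ⊤ hratT).2
    rwa [LocAux.inSub_top] at h
  · intro γ hγ
    rw [hdec γ]
    refine finsum_eq_single _ ⊤ (fun r hr => ?_)
    by_cases h : IsRational X r
    · exact hkey r h hr γ hγ
    · simp [hg₂ r h, conv]
end
end
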